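/- arXiv:1910.04947 — 7 statements merged into one kernel-verified Lean document; each statement's English description precedes it below -/
import Mathlib

section
/- Let n > 1 and let B₂(x) = x² − x + 1/6 be the second Bernoulli polynomial. For each divisor d of n, the average (1/φ(n/d)) · Σ_{0 ≤ i < n, gcd(i,n)=d} B₂(i/n) equals (1/6)·λ(n/d)/(n/d)², where λ(m) = ∏_{p | m, p prime} (−p). -/
/-- `λ(m) = ∏_{p | m, p prime} (−p)` as a rational number. -/
noncomputable def lambdaFun (m : ℕ) : ℚ := ∏ p ∈ m.primeFactors, (-(p : ℚ))

/-- The second Bernoulli polynomial `B₂(x) = x² − x + 1/6`. -/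
def bernoulli2 (x : ℚ) : ℚ := x ^ 2 - x + 1 / 6

open Finset


lemma sum_range_cast (m : ℕ) : ∑ j ∈ range m, (j : ℚ) = m * (m - 1) / 2 := by
  induction m with
  | zero => simp
  | succ k ih => rw [Finset.sum_range_succ, ih]; push_cast; ring

lemma sum_range_sq_cast (m : ℕ) : ∑ j ∈ range m, (j : ℚ) ^ 2 = m * (m - 1) * (2 * m - 1) / 6 := by
  induction m with
  | zero => simp
  | succ k ih => rw [Finset.sum_range_succ, ih]; push_cast; ring


lemma sum_bernoulli2_range (m : ℕ) (hm : 0 < m) :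
    ∑ j ∈ range m, bernoulli2 ((j : ℚ) / m) = 1 / (6 * m) := by
  have hm' : (m : ℚ) ≠ 0 := Nat.cast_ne_zero.mpr hm.ne'
  simp only [bernoulli2, div_pow]
  rw [Finset.sum_add_distrib, Finset.sum_sub_distrib, ← Finset.sum_div, ← Finset.sum_div,
    sum_range_cast, sum_range_sq_cast, Finset.sum_const, Finset.card_range]
  field_simp
  ring

noncomputable def F (m : ℕ) : ℚ :=
  ∑ j ∈ (range m).filter (fun j => Nat.gcd j m = 1), bernoulli2 ((j : ℚ) / m)

lemma sum_gcd_eq (d m : ℕ) (hd : 0 < d) (hm : 0 < m) :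
    ∑ i ∈ (range (d * m)).filter (fun i => Nat.gcd i (d * m) = d), bernoulli2 ((i : ℚ) / (d * m))
      = F m := by
  rw [F]
  refine (Finset.sum_bij (fun j _ => d * j) ?_ ?_ ?_ ?_).symm
  · intro j hj
    simp only [mem_filter, mem_range] at hj ⊢
    refine ⟨(Nat.mul_lt_mul_left hd).mpr hj.1, ?_⟩
    rw [Nat.gcd_mul_left, hj.2, mul_one]
  · intro a ha b hb hab
    exact Nat.eq_of_mul_eq_mul_left hd hab
  · intro i hi
    simp only [mem_filter, mem_range] at hi
    have hdvd : d ∣ i := hi.2 ▸ Nat.gcd_dvd_left i (d * m)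
    obtain ⟨j, rfl⟩ := hdvd
    refine ⟨j, ?_, rfl⟩
    simp only [mem_filter, mem_range]
    have h2 := hi.2
    rw [Nat.gcd_mul_left] at h2
    refine ⟨Nat.lt_of_mul_lt_mul_left hi.1, ?_⟩
    have : d * Nat.gcd j m = d * 1 := by rw [h2, mul_one]
    exact Nat.eq_of_mul_eq_mul_left hd this
  · intro j hj
    have hd' : (d : ℚ) ≠ 0 := Nat.cast_ne_zero.mpr hd.ne'
    push_cast
    rw [mul_div_mul_left _ _ hd']

lemma sum_F_divisors (m : ℕ) (hm : 0 < m) :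
    ∑ e ∈ m.divisors, F e = 1 / (6 * m) := by
  have key : ∑ e ∈ m.divisors, ∑ i ∈ (range m).filter (fun i => Nat.gcd i m = e),
      bernoulli2 ((i : ℚ) / m) = ∑ i ∈ range m, bernoulli2 ((i : ℚ) / m) := by
    apply Finset.sum_fiberwise_of_maps_to
    intro i _
    exact Nat.mem_divisors.mpr ⟨Nat.gcd_dvd_right i m, hm.ne'⟩
  have step : ∀ e ∈ m.divisors,
      (∑ i ∈ (range m).filter (fun i => Nat.gcd i m = e), bernoulli2 ((i : ℚ) / m)) = F (m / e) := by
    intro e he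
    obtain ⟨hdvd, -⟩ := Nat.mem_divisors.mp he
    have he0 : 0 < e := Nat.pos_of_dvd_of_pos hdvd hm
    have hq : 0 < m / e := Nat.div_pos (Nat.le_of_dvd hm hdvd) he0
    have hme : e * (m / e) = m := Nat.mul_div_cancel' hdvd
    have h2 := sum_gcd_eq e (m/e) he0 hq
    have h3 : ((e : ℚ) * ((m / e : ℕ) : ℚ)) = (m : ℚ) := by exact_mod_cast hme
    rw [h3, hme] at h2
    exact h2
  rw [Finset.sum_congr rfl step] at key
  rw [Nat.sum_div_divisors m F] at key
  rw [key, sum_bernoulli2_range m hm]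

open ArithmeticFunction in
lemma F_eq_moebius (m : ℕ) (hm : 0 < m) :
    F m = ∑ a ∈ m.divisors, (ArithmeticFunction.moebius a : ℚ) * a / (6 * m) := by
  have h := (ArithmeticFunction.sum_eq_iff_sum_mul_moebius_eq
    (f := F) (g := fun k => 1 / (6 * (k : ℚ)))).mp (fun k hk => sum_F_divisors k hk) m hm
  rw [← h, Nat.sum_divisorsAntidiagonal (fun a b => (moebius a : ℚ) * (1 / (6 * (b : ℚ))))]
  apply Finset.sum_congr rfl
  intro x hx
  obtain ⟨hdvd, hm0⟩ := Nat.mem_divisors.mp hx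
  have hx0 : (x : ℚ) ≠ 0 :=
    Nat.cast_ne_zero.mpr (Nat.pos_of_dvd_of_pos hdvd hm).ne'
  have hm0' : (m : ℚ) ≠ 0 := Nat.cast_ne_zero.mpr hm0
  rw [Nat.cast_div hdvd hx0]
  field_simp

lemma squarefree_prod_primes {s : Finset ℕ} (hs : ∀ p ∈ s, p.Prime) :
    Squarefree (∏ p ∈ s, p) := by
  induction s using Finset.induction with
  | empty => simpa using squarefree_one
  | @insert p s hps ih =>
    rw [Finset.prod_insert hps]
    have hpprime : p.Prime := hs p (Finset.mem_insert_self p s)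
    have hcop : Nat.Coprime p (∏ q ∈ s, q) := by
      apply Nat.Coprime.prod_right
      intro q hq
      exact (Nat.coprime_primes hpprime (hs q (Finset.mem_insert_of_mem hq))).mpr
        (by rintro rfl; exact hps hq)
    rw [Nat.squarefree_mul hcop]
    exact ⟨hpprime.squarefree, ih (fun q hq => hs q (Finset.mem_insert_of_mem hq))⟩

open ArithmeticFunction in
lemma sum_moebius_mul_self (m : ℕ) (hm : 0 < m) :
    ∑ a ∈ m.divisors, (moebius a : ℚ) * a = ∏ p ∈ m.primeFactors, (1 - (p : ℚ)) := by
  set r : ℕ := ∏ p ∈ m.primeFactors, p with hr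
  have hprimes : ∀ p ∈ m.primeFactors, p.Prime := fun p hp => Nat.prime_of_mem_primeFactors hp
  have hrsq : Squarefree r := squarefree_prod_primes hprimes
  have hrpf : r.primeFactors = m.primeFactors := Nat.primeFactors_prod hprimes
  have hrdvd : r ∣ m := Nat.prod_primeFactors_dvd m
  -- squarefree divisors of m = divisors of r
  have hset : m.divisors.filter Squarefree = r.divisors := by
    ext a
    simp only [Finset.mem_filter, Nat.mem_divisors]
    constructor
    · rintro ⟨⟨ham, -⟩, hasq⟩
      refine ⟨?_, hrsq.ne_zero⟩
      have h1 : ∏ p ∈ a.primeFactors, p = a := Nat.prod_primeFactors_of_squarefree hasq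
      have h2 : a.primeFactors ⊆ m.primeFactors := Nat.primeFactors_mono ham hm.ne'
      rw [← h1]
      exact Finset.prod_dvd_prod_of_subset _ _ _ h2
    · rintro ⟨har, -⟩
      exact ⟨⟨har.trans hrdvd, hm.ne'⟩, hrsq.squarefree_of_dvd har⟩
  have hfilter : ∑ a ∈ m.divisors, (moebius a : ℚ) * a
      = ∑ a ∈ m.divisors.filter Squarefree, (moebius a : ℚ) * a := by
    refine (Finset.sum_filter_of_ne ?_).symm
    intro a _ hne
    by_contra hnsq
    rw [moebius_eq_zero_of_not_squarefree hnsq] at hne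
    simp at hne
  have hprod := ArithmeticFunction.IsMultiplicative.prodPrimeFactors_one_sub_of_squarefree
    (R := ℚ) _ (ArithmeticFunction.isMultiplicative_id.natCast) hrsq
  rw [hrpf] at hprod
  simp only [ArithmeticFunction.natCoe_apply, ArithmeticFunction.id_apply,
    Nat.cast_id] at hprod
  rw [hfilter, hset, ← hprod]


/-- For `n > 1` and each divisor `d` of `n`, the average
`(1/φ(n/d)) · Σ_{0 ≤ i < n, gcd(i,n)=d} B₂(i/n)` equals `(1/6)·λ(n/d)/(n/d)²`. -/
theorem average_bernoulli2_eq (n d : ℕ) (hn : 1 < n) (hd : d ∣ n) :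
    (1 / (Nat.totient (n / d) : ℚ)) *
      ∑ i ∈ (Finset.range n).filter (fun i => Nat.gcd i n = d), bernoulli2 ((i : ℚ) / n) =
    (1 / 6) * lambdaFun (n / d) / ((n / d : ℕ) : ℚ) ^ 2 := by
  have hn0 : 0 < n := by omega
  have hd0 : 0 < d := Nat.pos_of_dvd_of_pos hd hn0
  set m : ℕ := n / d with hm
  have hm0 : 0 < m := Nat.div_pos (Nat.le_of_dvd hn0 hd) hd0
  have hnm : d * m = n := Nat.mul_div_cancel' hd
  -- Step 1: the sum equals F m
  have hsum : ∑ i ∈ (range n).filter (fun i => Nat.gcd i n = d), bernoulli2 ((i : ℚ) / n)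
      = F m := by
    have h2 := sum_gcd_eq d m hd0 hm0
    have h3 : ((d : ℚ) * (m : ℚ)) = (n : ℚ) := by exact_mod_cast hnm
    rw [h3, hnm] at h2
    exact h2
  -- Step 2: F m as a product
  have hF : F m = (∏ p ∈ m.primeFactors, (1 - (p : ℚ))) / (6 * m) := by
    rw [F_eq_moebius m hm0, ← Finset.sum_div, sum_moebius_mul_self m hm0]
  -- Step 3: algebra
  set s : Finset ℕ := m.primeFactors with hs
  have hps : ∀ p ∈ s, p.Prime := fun p hp => Nat.prime_of_mem_primeFactors hp
  have h1 : ∏ p ∈ s, (1 - (p : ℚ)) = (-1) ^ s.card * ∏ p ∈ s, ((p : ℚ) - 1) := by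
    rw [← Finset.prod_const, ← Finset.prod_mul_distrib]
    exact Finset.prod_congr rfl fun p _ => by ring
  have h2 : lambdaFun m = (-1) ^ s.card * ∏ p ∈ s, (p : ℚ) := by
    rw [lambdaFun, ← Finset.prod_const, ← Finset.prod_mul_distrib]
    exact Finset.prod_congr rfl fun p _ => by ring
  have hsub : ((∏ p ∈ s, (p - 1) : ℕ) : ℚ) = ∏ p ∈ s, ((p : ℚ) - 1) := by
    rw [Nat.cast_prod]
    exact Finset.prod_congr rfl fun p hp => by
      rw [Nat.cast_sub (hps p hp).one_lt.le, Nat.cast_one]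
  have h3 : (Nat.totient m : ℚ) * ∏ p ∈ s, (p : ℚ) = (m : ℚ) * ∏ p ∈ s, ((p : ℚ) - 1) := by
    have := congrArg (fun x : ℕ => (x : ℚ)) (Nat.totient_mul_prod_primeFactors m)
    simp only [Nat.cast_mul, Nat.cast_prod] at this
    rw [this, ← hsub, Nat.cast_prod]
  have hphi : (Nat.totient m : ℚ) ≠ 0 := Nat.cast_ne_zero.mpr (Nat.totient_pos.mpr hm0).ne'
  have hm' : (m : ℚ) ≠ 0 := Nat.cast_ne_zero.mpr hm0.ne'
  rw [hsum, hF, h1, h2]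
  field_simp
  linear_combination (-1 : ℚ) * h3
end

section
/- For every positive integer n and every divisor t of n, Σ_{m | n} (λ(m)/m) · (φ(gcd(m, n/m))/gcd(m, n/m)) · ψ(n/m) · gcd(t, m) = n/t, where λ(m) = ∏_{p | m} (−p) and ψ(k) = k·∏_{p | k} (1 + 1/p). -/
open Finset

/-- The Dedekind psi function `ψ(k) = k·∏_{p | k} (1 + 1/p)` as a rational number. -/
noncomputable def dedekindPsi (k : ℕ) : ℚ := (k : ℚ) * ∏ p ∈ k.primeFactors, (1 + 1 / (p : ℚ))

noncomputable def cterm (n t m : ℕ) : ℚ :=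
  (lambdaFun m / (m : ℚ)) *
    ((Nat.totient (Nat.gcd m (n / m)) : ℚ) / (Nat.gcd m (n / m) : ℚ)) *
    dedekindPsi (n / m) * (Nat.gcd t m : ℚ)

lemma lambdaFun_mul {a b : ℕ} (ha : a ≠ 0) (hb : b ≠ 0) (hab : a.Coprime b) :
    lambdaFun (a * b) = lambdaFun a * lambdaFun b := by
  unfold lambdaFun
  rw [Nat.Coprime.primeFactors_mul hab, Finset.prod_union hab.disjoint_primeFactors]

lemma dedekindPsi_mul {a b : ℕ} (ha : a ≠ 0) (hb : b ≠ 0) (hab : a.Coprime b) :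
    dedekindPsi (a * b) = dedekindPsi a * dedekindPsi b := by
  unfold dedekindPsi
  rw [Nat.Coprime.primeFactors_mul hab, Finset.prod_union hab.disjoint_primeFactors]
  push_cast
  ring

lemma sum_divisors_coprime_mul {a b : ℕ} (ha : a ≠ 0) (hb : b ≠ 0) (hab : a.Coprime b)
    (f : ℕ → ℚ) :
    ∑ d ∈ (a * b).divisors, f d = ∑ q ∈ a.divisors ×ˢ b.divisors, f (q.1 * q.2) := by
  refine Finset.sum_nbij' (fun d => (d.gcd a, d.gcd b)) (fun q => q.1 * q.2) ?_ ?_ ?_ ?_ ?_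
  · intro d hd
    rw [Nat.mem_divisors] at hd
    simp only [Finset.mem_product, Nat.mem_divisors]
    exact ⟨⟨Nat.gcd_dvd_right _ _, ha⟩, ⟨Nat.gcd_dvd_right _ _, hb⟩⟩
  · intro q hq
    simp only [Finset.mem_product, Nat.mem_divisors] at hq
    exact Nat.mem_divisors.mpr ⟨mul_dvd_mul hq.1.1 hq.2.1, mul_ne_zero ha hb⟩
  · intro d hd
    rw [Nat.mem_divisors] at hd
    exact (Nat.gcd_mul_gcd_eq_iff_dvd_mul_of_coprime hab).mpr hd.1
  · intro q hq
    simp only [Finset.mem_product, Nat.mem_divisors] at hq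
    have h1 : (q.1 * q.2).gcd a = q.1 := by
      rw [Nat.Coprime.gcd_mul_right_cancel _ ((Nat.Coprime.coprime_dvd_left hq.2.1 hab.symm)),
        Nat.gcd_eq_left hq.1.1]
    have h2 : (q.1 * q.2).gcd b = q.2 := by
      rw [mul_comm, Nat.Coprime.gcd_mul_right_cancel _ ((Nat.Coprime.coprime_dvd_left hq.1.1 hab)),
        Nat.gcd_eq_left hq.2.1]
    simp [h1, h2]
  · intro d hd
    rw [Nat.mem_divisors] at hd
    rw [(Nat.gcd_mul_gcd_eq_iff_dvd_mul_of_coprime hab).mpr hd.1]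

lemma cterm_mul {a b ta tb i j : ℕ} (ha : a ≠ 0) (hb : b ≠ 0) (hab : a.Coprime b)
    (hta : ta ∣ a) (htb : tb ∣ b) (hi : i ∣ a) (hj : j ∣ b) :
    cterm (a * b) (ta * tb) (i * j) = cterm a ta i * cterm b tb j := by
  have hi0 : i ≠ 0 := fun h => ha (Nat.eq_zero_of_zero_dvd (h ▸ hi))
  have hj0 : j ≠ 0 := fun h => hb (Nat.eq_zero_of_zero_dvd (h ▸ hj))
  have hx0 : a / i ≠ 0 :=
    (Nat.div_pos (Nat.le_of_dvd (Nat.pos_of_ne_zero ha) hi) (Nat.pos_of_ne_zero hi0)).ne'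
  have hy0 : b / j ≠ 0 :=
    (Nat.div_pos (Nat.le_of_dvd (Nat.pos_of_ne_zero hb) hj) (Nat.pos_of_ne_zero hj0)).ne'
  have hij : i.Coprime j := Nat.Coprime.coprime_dvd_left hi (Nat.Coprime.coprime_dvd_right hj hab)
  have hxy : (a / i).Coprime (b / j) :=
    Nat.Coprime.coprime_dvd_left (Nat.div_dvd_of_dvd hi)
      (Nat.Coprime.coprime_dvd_right (Nat.div_dvd_of_dvd hj) hab)
  have hdiv : a * b / (i * j) = (a / i) * (b / j) := (Nat.div_mul_div_comm hi hj).symm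
  have hgcd1 : (i * j).gcd (a / i * (b / j)) = i.gcd (a / i) * j.gcd (b / j) := by
    rw [Nat.Coprime.gcd_mul _ hxy]
    congr 1
    · exact Nat.Coprime.gcd_mul_right_cancel _
        (Nat.Coprime.coprime_dvd_right (Nat.div_dvd_of_dvd hi)
          (Nat.Coprime.coprime_dvd_left hj hab.symm))
    · rw [mul_comm i j]
      exact Nat.Coprime.gcd_mul_right_cancel _
        (Nat.Coprime.coprime_dvd_right (Nat.div_dvd_of_dvd hj)
          (Nat.Coprime.coprime_dvd_left hi hab))
  have hgg : (i.gcd (a / i)).Coprime (j.gcd (b / j)) :=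
    Nat.Coprime.coprime_dvd_left (Nat.gcd_dvd_left _ _)
      (Nat.Coprime.coprime_dvd_right (Nat.gcd_dvd_left _ _) hij)
  have htot : Nat.totient (i.gcd (a / i) * (j.gcd (b / j))) =
      Nat.totient (i.gcd (a / i)) * Nat.totient (j.gcd (b / j)) := Nat.totient_mul hgg
  have hgcdt : (ta * tb).gcd (i * j) = ta.gcd i * tb.gcd j := by
    rw [Nat.Coprime.gcd_mul _ hij]
    congr 1
    · exact Nat.Coprime.gcd_mul_right_cancel _
        (Nat.Coprime.coprime_dvd_right hi (Nat.Coprime.coprime_dvd_left htb hab.symm))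
    · rw [mul_comm ta tb]
      exact Nat.Coprime.gcd_mul_right_cancel _
        (Nat.Coprime.coprime_dvd_right hj (Nat.Coprime.coprime_dvd_left hta hab))
  unfold cterm
  rw [hdiv, hgcd1, htot, hgcdt, lambdaFun_mul hi0 hj0 hij, dedekindPsi_mul hx0 hy0 hxy]
  push_cast
  ring

lemma gcd_pow_pow (p i k : ℕ) : Nat.gcd (p ^ i) (p ^ k) = p ^ min i k := by
  rcases le_total i k with h | h
  · rw [min_eq_left h, Nat.gcd_eq_left (pow_dvd_pow p h)]
  · rw [min_eq_right h, Nat.gcd_eq_right (pow_dvd_pow p h)]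

lemma lambdaFun_one : lambdaFun 1 = 1 := by simp [lambdaFun]
lemma dedekindPsi_one : dedekindPsi 1 = 1 := by simp [dedekindPsi]
lemma dedekindPsi_zero : dedekindPsi 0 = 0 := by simp [dedekindPsi]

lemma lambdaFun_prime_pow {p : ℕ} (hp : p.Prime) {i : ℕ} (hi : i ≠ 0) :
    lambdaFun (p ^ i) = -(p : ℚ) := by
  unfold lambdaFun
  rw [Nat.primeFactors_prime_pow hi hp, Finset.prod_singleton]

lemma dedekindPsi_prime_pow {p : ℕ} (hp : p.Prime) {j : ℕ} (hj : j ≠ 0) :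
    dedekindPsi (p ^ j) = (p : ℚ) ^ j * (1 + 1 / (p : ℚ)) := by
  unfold dedekindPsi
  rw [Nat.primeFactors_prime_pow hj hp, Finset.prod_singleton]
  push_cast; ring

lemma totient_prime_pow_cast {p : ℕ} (hp : p.Prime) {g : ℕ} (hg : g ≠ 0) :
    ((Nat.totient (p ^ g) : ℚ)) = (p : ℚ) ^ g * (1 - 1 / (p : ℚ)) := by
  obtain ⟨k, rfl⟩ := Nat.exists_eq_succ_of_ne_zero hg
  rw [Nat.totient_prime_pow_succ hp]
  have hp0 : (p : ℚ) ≠ 0 := Nat.cast_ne_zero.mpr hp.pos.ne'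
  push_cast [Nat.cast_sub hp.one_lt.le]
  rw [pow_succ]
  field_simp

lemma cterm_pp_zero {p : ℕ} (hp : p.Prime) {a c : ℕ} (ha : a ≠ 0) :
    cterm (p ^ a) (p ^ c) 1 = (p : ℚ) ^ (a : ℤ) + (p : ℚ) ^ ((a : ℤ) - 1) := by
  have hp0 : (p : ℚ) ≠ 0 := Nat.cast_ne_zero.mpr hp.pos.ne'
  unfold cterm
  rw [Nat.div_one, Nat.gcd_one_left, Nat.gcd_one_right, Nat.totient_one, dedekindPsi_prime_pow hp ha, lambdaFun_one]
  simp only [zpow_sub₀ hp0, zpow_natCast, zpow_one]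
  push_cast
  field_simp

lemma cterm_pp_mid {p : ℕ} (hp : p.Prime) {a c n : ℕ} (h1 : n ≠ 0) (h2 : n < a) :
    cterm (p ^ a) (p ^ c) (p ^ n) =
      (p : ℚ) ^ ((a : ℤ) - n - n - 1 + (min c n : ℕ)) -
        (p : ℚ) ^ ((a : ℤ) - n - n + 1 + (min c n : ℕ)) := by
  have hp0 : (p : ℚ) ≠ 0 := Nat.cast_ne_zero.mpr hp.pos.ne'
  have hdiv : p ^ a / p ^ n = p ^ (a - n) := Nat.pow_div h2.le hp.pos
  have hg : min n (a - n) ≠ 0 := by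
    simp only [ne_eq, Nat.min_eq_zero_iff]
    omega
  unfold cterm
  rw [hdiv, gcd_pow_pow, gcd_pow_pow, lambdaFun_prime_pow hp h1,
    dedekindPsi_prime_pow hp (by omega : a - n ≠ 0), totient_prime_pow_cast hp hg]
  have e1 : ((a - n : ℕ) : ℤ) = (a : ℤ) - n := by omega
  have e2 : ∀ k : ℕ, (p : ℚ) ^ k = (p : ℚ) ^ (k : ℤ) := fun k => (zpow_natCast _ k).symm
  rw [e2 (a - n), e1]
  simp only [Nat.cast_pow]
  simp only [zpow_add₀ hp0, zpow_sub₀ hp0, zpow_natCast, zpow_one]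
  have hpg : (p : ℚ) ^ min n (a - n) ≠ 0 := pow_ne_zero _ hp0
  have hpn : (p : ℚ) ^ n ≠ 0 := pow_ne_zero _ hp0
  field_simp
  ring

lemma cterm_pp_last {p : ℕ} (hp : p.Prime) {a c : ℕ} (ha : a ≠ 0) (hc : c ≤ a) :
    cterm (p ^ a) (p ^ c) (p ^ a) = -(p : ℚ) ^ (1 - (a : ℤ) + c) := by
  have hp0 : (p : ℚ) ≠ 0 := Nat.cast_ne_zero.mpr hp.pos.ne'
  unfold cterm
  rw [Nat.div_self (pow_pos hp.pos a), Nat.gcd_one_right, gcd_pow_pow, min_eq_left hc,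
    lambdaFun_prime_pow hp ha, dedekindPsi_one, Nat.totient_one]
  simp only [Nat.cast_pow]
  simp only [zpow_add₀ hp0, zpow_sub₀ hp0, zpow_natCast, zpow_one]
  have hpa : (p : ℚ) ^ a ≠ 0 := pow_ne_zero _ hp0
  field_simp

lemma cterm_pp_big {p : ℕ} (hp : p.Prime) {a c n : ℕ} (h : a < n) :
    cterm (p ^ a) (p ^ c) (p ^ n) = 0 := by
  have : p ^ a / p ^ n = 0 :=
    Nat.div_eq_of_lt (Nat.pow_lt_pow_right hp.one_lt h)
  unfold cterm
  rw [this, dedekindPsi_zero]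
  ring

lemma sum_cterm_prime_pow {p : ℕ} (hp : p.Prime) {a c : ℕ} (ha : a ≠ 0) (hc : c ≤ a) :
    ∑ m ∈ (p ^ a).divisors, cterm (p ^ a) (p ^ c) m = (p : ℚ) ^ ((a : ℤ) - c) := by
  have hp0 : (p : ℚ) ≠ 0 := Nat.cast_ne_zero.mpr hp.pos.ne'
  set g : ℕ → ℚ := fun k =>
    if k = 0 then 0
    else if k ≤ a then
      (p : ℚ) ^ ((a : ℤ) - (min (k - 1) c : ℕ)) +
        (p : ℚ) ^ ((a : ℤ) + (min (k - 1) c : ℕ) - k - k + 1)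
    else (p : ℚ) ^ ((a : ℤ) - c) with hg
  have hstep : ∀ n : ℕ, g (n + 1) = g n + cterm (p ^ a) (p ^ c) (p ^ n) := by
    intro n
    rcases Nat.eq_zero_or_pos n with rfl | hn
    · rw [hg]
      simp only [pow_zero]
      rw [cterm_pp_zero hp ha]
      norm_num [Nat.one_le_iff_ne_zero.mpr ha]
    · rcases lt_trichotomy n a with h | heq | h
      · -- middle: 1 ≤ n < a
        rw [hg, cterm_pp_mid hp hn.ne' h]
        simp only [if_neg (Nat.succ_ne_zero n), if_neg hn.ne', if_pos h.le,
          if_pos (Nat.succ_le_of_lt h), Nat.add_sub_cancel]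
        rcases le_or_gt n c with hnc | hnc
        · rw [min_eq_left (by omega : n - 1 ≤ c), min_eq_right hnc, min_eq_left hnc]
          have e1 : ((n - 1 : ℕ) : ℤ) = (n : ℤ) - 1 := by omega
          push_cast [e1]
          simp only [zpow_add₀ hp0, zpow_sub₀ hp0, zpow_natCast, zpow_one]
          have h1 : (p : ℚ) ^ n ≠ 0 := pow_ne_zero _ hp0
          field_simp
          ring
        · rw [min_eq_right (by omega : c ≤ n - 1), min_eq_left hnc.le, min_eq_right hnc.le]
          push_cast
          simp only [zpow_add₀ hp0, zpow_sub₀ hp0, zpow_natCast, zpow_one]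
          have h1 : (p : ℚ) ^ n ≠ 0 := pow_ne_zero _ hp0
          have h2 : (p : ℚ) ^ c ≠ 0 := pow_ne_zero _ hp0
          field_simp
          ring
      · -- n = a
        subst heq
        rw [hg, cterm_pp_last hp ha hc]
        simp only [if_neg (Nat.succ_ne_zero n), if_neg ha,
          if_neg (by omega : ¬ n + 1 ≤ n), if_pos (le_refl n), Nat.add_sub_cancel]
        rcases le_or_gt c (n - 1) with hca | hca
        · rw [min_eq_right hca]
          push_cast
          simp only [zpow_add₀ hp0, zpow_sub₀ hp0, zpow_natCast, zpow_one]
          have h1 : (p : ℚ) ^ n ≠ 0 := pow_ne_zero _ hp0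
          have h2 : (p : ℚ) ^ c ≠ 0 := pow_ne_zero _ hp0
          field_simp
          ring
        · have hcn : c = n := by omega
          subst hcn
          rw [min_eq_left (by omega : c - 1 ≤ c)]
          have e1 : ((c - 1 : ℕ) : ℤ) = (c : ℤ) - 1 := by omega
          push_cast [e1]
          simp only [zpow_add₀ hp0, zpow_sub₀ hp0, zpow_natCast, zpow_one]
          have h1 : (p : ℚ) ^ c ≠ 0 := pow_ne_zero _ hp0
          field_simp
          ring
      · -- n > a
        rw [hg, cterm_pp_big hp h]
        simp only [if_neg (Nat.succ_ne_zero n), if_neg (by omega : n ≠ 0),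
          if_neg (by omega : ¬ n + 1 ≤ a), if_neg (by omega : ¬ n ≤ a), add_zero]
  rw [Nat.sum_divisors_prime_pow hp,
    Finset.sum_range_induction _ g (by rw [hg]; simp) (a + 1) (fun k _ => hstep k)]
  rw [hg]
  simp only [if_neg (Nat.succ_ne_zero a), if_neg (by omega : ¬ a + 1 ≤ a)]


lemma key : ∀ n : ℕ, ∀ t : ℕ, t ∣ n → n ≠ 0 →
    ∑ m ∈ n.divisors, cterm n t m = (n : ℚ) / (t : ℚ) := by
  intro n
  induction n using Nat.recOnPosPrimePosCoprime with
  | prime_pow p a hpp haa =>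
    intro t ht _
    have hp0 : (p : ℚ) ≠ 0 := Nat.cast_ne_zero.mpr hpp.pos.ne'
    obtain ⟨c, hc, rfl⟩ := (Nat.dvd_prime_pow hpp).mp ht
    rw [sum_cterm_prime_pow hpp (by omega : a ≠ 0) hc]
    push_cast
    rw [zpow_sub₀ hp0, zpow_natCast, zpow_natCast]
  | zero =>
    intro t ht h0
    exact absurd rfl h0
  | one =>
    intro t ht _
    rw [Nat.dvd_one.mp ht, Nat.divisors_one, Finset.sum_singleton]
    norm_num [cterm, lambdaFun_one, dedekindPsi_one]
  | coprime a b ha1 hb1 hab IHa IHb =>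
    intro t ht _
    have ha0 : a ≠ 0 := by omega
    have hb0 : b ≠ 0 := by omega
    have htab : t.gcd a * t.gcd b = t :=
      (Nat.gcd_mul_gcd_eq_iff_dvd_mul_of_coprime hab).mpr ht
    rw [sum_divisors_coprime_mul ha0 hb0 hab, ← htab]
    calc ∑ q ∈ a.divisors ×ˢ b.divisors, cterm (a * b) (t.gcd a * t.gcd b) (q.1 * q.2)
        = ∑ q ∈ a.divisors ×ˢ b.divisors, cterm a (t.gcd a) q.1 * cterm b (t.gcd b) q.2 := by
          refine Finset.sum_congr rfl ?_
          rintro ⟨i, j⟩ hq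
          simp only [Finset.mem_product, Nat.mem_divisors] at hq
          exact cterm_mul ha0 hb0 hab (Nat.gcd_dvd_right t a) (Nat.gcd_dvd_right t b)
            hq.1.1 hq.2.1
      _ = (∑ i ∈ a.divisors, cterm a (t.gcd a) i) * (∑ j ∈ b.divisors, cterm b (t.gcd b) j) := by
          rw [Finset.sum_product, ← Finset.sum_mul_sum]
      _ = ((a : ℚ) / (t.gcd a : ℚ)) * ((b : ℚ) / (t.gcd b : ℚ)) := by
          rw [IHa _ (Nat.gcd_dvd_right t a) ha0, IHb _ (Nat.gcd_dvd_right t b) hb0]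
      _ = ((a * b : ℕ) : ℚ) / ((t.gcd a * t.gcd b : ℕ) : ℚ) := by
          push_cast
          rw [div_mul_div_comm]

/-- For every positive integer `n` and every divisor `t` of `n`,
`Σ_{m | n} (λ(m)/m)·(φ(gcd(m,n/m))/gcd(m,n/m))·ψ(n/m)·gcd(t,m) = n/t`. -/
theorem sum_c_eq (n t : ℕ) (hn : 0 < n) (ht : t ∣ n) :
    (∑ m ∈ n.divisors,
        (lambdaFun m / (m : ℚ)) *
          ((Nat.totient (Nat.gcd m (n / m)) : ℚ) / (Nat.gcd m (n / m) : ℚ)) *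
          dedekindPsi (n / m) * (Nat.gcd t m : ℚ)) = (n : ℚ) / (t : ℚ) := by
  have h := key n t ht hn.ne'
  simpa only [cterm] using h
end

section
/- For positive integer k and m ∈ ℤ, the Ramanujan sum C_k(m) := Σ_{a ∈ (ℤ/kℤ)*} e^{2πi·am/k} equals Σ_{c | gcd(k,m)} c·μ(k/c), where μ is the Möbius function. -/
open Complex

lemma sum_exp_full (n : ℕ) (hn : 0 < n) (m : ℤ) :
    ∑ a ∈ Finset.range n, Complex.exp (2 * Real.pi * Complex.I * a * m / n) =
      if (n : ℤ) ∣ m then (n : ℂ) else 0 := by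
  have hn0 : (n : ℂ) ≠ 0 := Nat.cast_ne_zero.mpr hn.ne'
  have hterm : ∀ a : ℕ, Complex.exp (2 * Real.pi * Complex.I * a * m / n)
      = Complex.exp (2 * Real.pi * Complex.I * m / n) ^ a := by
    intro a
    rw [← Complex.exp_nat_mul]
    congr 1
    ring
  simp only [hterm]
  split_ifs with h
  · obtain ⟨t, rfl⟩ := h
    have : 2 * (Real.pi : ℂ) * Complex.I * (↑n * ↑t) / ↑n = (t : ℂ) * (2 * Real.pi * Complex.I) := by
      field_simp
    push_cast
    rw [this]
    rw [show ((t : ℂ)) = ((t : ℤ) : ℂ) by push_cast; ring, Complex.exp_int_mul_two_pi_mul_I]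
    simp
  · set z := Complex.exp (2 * Real.pi * Complex.I * m / n) with hz
    have hzn : z ^ n = 1 := by
      rw [hz, ← Complex.exp_nat_mul]
      have : (n : ℂ) * (2 * Real.pi * Complex.I * m / n) = (m : ℂ) * (2 * Real.pi * Complex.I) := by
        field_simp
      rw [this, Complex.exp_int_mul_two_pi_mul_I]
    have hz1 : z ≠ 1 := by
      intro he
      rw [hz, Complex.exp_eq_one_iff] at he
      obtain ⟨t, ht⟩ := he
      apply h
      refine ⟨t, ?_⟩
      have hI : (2 : ℂ) * Real.pi * Complex.I ≠ 0 := by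
        simp [Real.pi_ne_zero, Complex.I_ne_zero]
      have hmc : (m : ℂ) = (n : ℂ) * t := by
        field_simp at ht
        have h2 : (2:ℂ) * Real.pi * Complex.I * (m:ℂ) = 2 * Real.pi * Complex.I * ((n:ℂ) * t) := by
          linear_combination (2 * Real.pi * Complex.I) * ht
        exact mul_left_cancel₀ hI h2
      exact_mod_cast hmc
    rw [geom_sum_eq hz1, hzn]
    simp


lemma ramInnerSum (k d : ℕ) (hk : 0 < k) (hd : d ∣ k) (hd0 : 0 < d) (m : ℤ) :
    ∑ a ∈ (Finset.range k).filter (fun a => d ∣ a),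
        Complex.exp (2 * Real.pi * Complex.I * a * m / k) =
      if ((k / d : ℕ) : ℤ) ∣ m then ((k / d : ℕ) : ℂ) else 0 := by
  have hkd : d * (k / d) = k := Nat.mul_div_cancel' hd
  have hq : 0 < k / d := Nat.div_pos (Nat.le_of_dvd hk hd) hd0
  rw [← sum_exp_full (k / d) hq m]
  apply Finset.sum_nbij' (fun a => a / d) (fun b => d * b)
  · intro a ha
    simp only [Finset.mem_filter, Finset.mem_range] at ha
    exact Finset.mem_range.mpr (Nat.div_lt_div_of_lt_of_dvd ⟨k/d, hkd.symm⟩ ha.1)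
  · intro b hb
    simp only [Finset.mem_range] at hb
    refine Finset.mem_filter.mpr ⟨Finset.mem_range.mpr ?_, ⟨b, rfl⟩⟩
    calc d * b < d * (k / d) := (Nat.mul_lt_mul_left hd0).mpr hb
      _ = k := hkd
  · intro a ha
    simp only [Finset.mem_filter] at ha
    exact Nat.mul_div_cancel' ha.2
  · intro b hb
    exact Nat.mul_div_cancel_left b hd0
  · intro a ha
    simp only [Finset.mem_filter, Finset.mem_range] at ha
    obtain ⟨c, rfl⟩ := ha.2
    congr 1
    have hd0' : (d : ℂ) ≠ 0 := Nat.cast_ne_zero.mpr hd0.ne'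
    have hq0' : ((k / d : ℕ) : ℂ) ≠ 0 := Nat.cast_ne_zero.mpr hq.ne'
    have hkc : (k : ℂ) = (d : ℂ) * ((k / d : ℕ) : ℂ) := by exact_mod_cast hkd.symm
    rw [Nat.mul_div_cancel_left c hd0, hkc]
    push_cast
    field_simp

/-- For a positive integer `k` and `m ∈ ℤ`, the Ramanujan sum
`C_k(m) = Σ_{a ∈ (ℤ/kℤ)*} e^{2πi·am/k}` equals `Σ_{c | gcd(k,m)} c·μ(k/c)`. -/
theorem ramanujan_sum_eq (k : ℕ) (hk : 0 < k) (m : ℤ) :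
    (∑ a ∈ (Finset.range k).filter (fun a => Nat.gcd a k = 1),
        Complex.exp (2 * Real.pi * Complex.I * a * m / k)) =
      ∑ c ∈ (Int.gcd k m).divisors, (c : ℂ) * (ArithmeticFunction.moebius (k / c) : ℂ) := by
  have hmu : ∀ n : ℕ, (∑ d ∈ n.divisors, (ArithmeticFunction.moebius d : ℂ))
      = if n = 1 then 1 else 0 := by
    intro n
    have h1 : (∑ d ∈ n.divisors, ArithmeticFunction.moebius d : ℤ)
        = if n = 1 then 1 else 0 := by
      rw [← ArithmeticFunction.coe_mul_zeta_apply, ArithmeticFunction.moebius_mul_coe_zeta,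
        ArithmeticFunction.one_apply]
    calc (∑ d ∈ n.divisors, (ArithmeticFunction.moebius d : ℂ))
        = ((∑ d ∈ n.divisors, ArithmeticFunction.moebius d : ℤ) : ℂ) := by push_cast; rfl
      _ = _ := by rw [h1]; split_ifs <;> simp
  rw [Finset.sum_filter]
  have step1 : ∀ a ∈ Finset.range k,
      (if Nat.gcd a k = 1 then Complex.exp (2 * Real.pi * Complex.I * a * m / k) else 0)
        = ∑ d ∈ (Nat.gcd a k).divisors,
            (ArithmeticFunction.moebius d : ℂ) * Complex.exp (2 * Real.pi * Complex.I * a * m / k) := by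
    intro a _
    rw [← Finset.sum_mul, hmu]
    split_ifs <;> simp
  rw [Finset.sum_congr rfl step1]
  have hdiv : ∀ a : ℕ, (Nat.gcd a k).divisors = k.divisors.filter (fun d => d ∣ a) := by
    intro a
    ext d
    simp only [Nat.mem_divisors, Finset.mem_filter, Nat.dvd_gcd_iff]
    constructor
    · rintro ⟨⟨h1, h2⟩, _⟩; exact ⟨⟨h2, hk.ne'⟩, h1⟩
    · rintro ⟨⟨h2, _⟩, h1⟩
      exact ⟨⟨h1, h2⟩, fun hc => hk.ne' (Nat.eq_zero_of_gcd_eq_zero_right hc)⟩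
  simp only [hdiv]
  rw [show (∑ a ∈ Finset.range k, ∑ d ∈ k.divisors.filter (fun d => d ∣ a),
        (ArithmeticFunction.moebius d : ℂ) * Complex.exp (2 * Real.pi * Complex.I * a * m / k))
      = ∑ d ∈ k.divisors, ∑ a ∈ (Finset.range k).filter (fun a => d ∣ a),
        (ArithmeticFunction.moebius d : ℂ) * Complex.exp (2 * Real.pi * Complex.I * a * m / k) by
    simp only [Finset.sum_filter]
    exact Finset.sum_comm]
  have step2 : ∀ d ∈ k.divisors,
      (∑ a ∈ (Finset.range k).filter (fun a => d ∣ a),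
        (ArithmeticFunction.moebius d : ℂ) * Complex.exp (2 * Real.pi * Complex.I * a * m / k))
      = (ArithmeticFunction.moebius d : ℂ) * (if ((k / d : ℕ) : ℤ) ∣ m then ((k / d : ℕ) : ℂ) else 0) := by
    intro d hd
    rw [← Finset.mul_sum, ramInnerSum k d hk (Nat.mem_divisors.mp hd).1
      (Nat.pos_of_mem_divisors hd) m]
  rw [Finset.sum_congr rfl step2]
  rw [← Nat.sum_div_divisors k (fun d => (ArithmeticFunction.moebius d : ℂ) *
      (if ((k / d : ℕ) : ℤ) ∣ m then ((k / d : ℕ) : ℂ) else 0))]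
  have step3 : ∀ d ∈ k.divisors,
      ((ArithmeticFunction.moebius (k / d) : ℂ) *
        (if ((k / (k / d) : ℕ) : ℤ) ∣ m then ((k / (k / d) : ℕ) : ℂ) else 0))
      = if ((d : ℕ) : ℤ) ∣ m then (d : ℂ) * (ArithmeticFunction.moebius (k / d) : ℂ) else 0 := by
    intro d hd
    rw [Nat.div_div_self (Nat.mem_divisors.mp hd).1 hk.ne']
    split_ifs <;> ring
  rw [Finset.sum_congr rfl step3, ← Finset.sum_filter]
  congr 1
  ext c
  simp only [Nat.mem_divisors, Finset.mem_filter]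
  have hg : Int.gcd (k : ℤ) m = Nat.gcd k m.natAbs := by
    rw [Int.gcd_eq_natAbs, Int.natAbs_natCast]
  rw [hg, Nat.dvd_gcd_iff, ← Int.natCast_dvd]
  have hgne : Nat.gcd k m.natAbs ≠ 0 := fun h => hk.ne' (Nat.eq_zero_of_gcd_eq_zero_left h)
  have hkne := hk.ne'
  tauto
end

section
/- The number of cusps of Γ₀(n) equals Σ_{c | n} φ(gcd(c, n/c)). -/
open Matrix

/-- A primitive vector in `ℤ²`, representing the cusp `a/c ∈ ℚ ∪ {∞}` (with `v = (a, c)`);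
`ℚ ∪ {∞}` is identified with the primitive vectors modulo `±1`, and `-1 ∈ Γ₀(n)`, so
`Γ₀(n)`-orbits of primitive vectors are exactly the cusps of `Γ₀(n)`. -/
def PrimitiveVec : Type := { v : Fin 2 → ℤ // IsCoprime (v 0) (v 1) }

namespace CuspsAux

/-- `d(v) = gcd(c, n)`. -/
def dd (n : ℕ) (v : PrimitiveVec) : ℕ := Int.gcd (v.1 1) n

/-- `g(v) = gcd(d, n/d)`. -/
def gg (n : ℕ) (v : PrimitiveVec) : ℕ := Nat.gcd (dd n v) (n / dd n v)

/-- `c₁(v) = c / d`. -/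
def cc (n : ℕ) (v : PrimitiveVec) : ℤ := v.1 1 / (dd n v : ℤ)

lemma dd_dvd (n : ℕ) (v : PrimitiveVec) : dd n v ∣ n := by
  have := Int.gcd_dvd_right (a := v.1 1) (b := (n : ℤ))
  rwa [Int.natCast_dvd_natCast] at this

lemma dd_pos (n : ℕ) (hn : 0 < n) (v : PrimitiveVec) : 0 < dd n v := by
  rw [dd, Int.gcd_pos_iff]
  right
  simpa using hn.ne'

lemma cc_spec (n : ℕ) (v : PrimitiveVec) : v.1 1 = (dd n v : ℤ) * cc n v :=
  (Int.mul_ediv_cancel' (Int.gcd_dvd_left (a := v.1 1) (b := (n : ℤ)))).symm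

lemma coprime_a_dd (n : ℕ) (v : PrimitiveVec) : IsCoprime (v.1 0) ((dd n v : ℕ) : ℤ) :=
  v.2.of_isCoprime_of_dvd_right (Int.gcd_dvd_left (a := v.1 1) (b := (n : ℤ)))

lemma n_eq (n : ℕ) (v : PrimitiveVec) : (n : ℤ) = (dd n v : ℤ) * ((n / dd n v : ℕ) : ℤ) := by
  rw [← Nat.cast_mul, Nat.mul_div_cancel' (dd_dvd n v)]

lemma coprime_cc (n : ℕ) (hn : 0 < n) (v : PrimitiveVec) :
    IsCoprime (cc n v) (((n / dd n v : ℕ)) : ℤ) := by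
  rw [Int.isCoprime_iff_gcd_eq_one]
  have key : dd n v * Int.gcd (cc n v) ((n / dd n v : ℕ) : ℤ) = dd n v * 1 := by
    have h1 : Int.gcd ((dd n v : ℤ) * cc n v) ((dd n v : ℤ) * ((n / dd n v : ℕ) : ℤ))
        = dd n v * Int.gcd (cc n v) ((n / dd n v : ℕ) : ℤ) := by
      rw [Int.gcd_mul_left, Int.natAbs_natCast]
    rw [← h1, ← cc_spec, ← n_eq, mul_one]
    rfl
  exact Nat.eq_of_mul_eq_mul_left (dd_pos n hn v) key

lemma gg_dvd_dd (n : ℕ) (v : PrimitiveVec) : gg n v ∣ dd n v := Nat.gcd_dvd_left _ _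

lemma gg_dvd_ndiv (n : ℕ) (v : PrimitiveVec) : gg n v ∣ n / dd n v := Nat.gcd_dvd_right _ _

lemma isUnit_int_of_isCoprime {x : ℤ} {m : ℕ} (h : IsCoprime x (m : ℤ)) :
    IsUnit ((x : ZMod m)) := by
  obtain ⟨u, w, huw⟩ := h
  apply IsUnit.of_mul_eq_one ((u : ℤ) : ZMod m)
  have h2 : ((u * x + w * m : ℤ) : ZMod m) = 1 := by rw [huw]; norm_cast
  push_cast at h2
  rw [ZMod.natCast_self, mul_zero, add_zero] at h2
  rw [mul_comm]; exact h2

lemma isUnit_f (n : ℕ) (hn : 0 < n) (v : PrimitiveVec) :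
    IsUnit (((v.1 0 * cc n v : ℤ) : ZMod (gg n v))) := by
  apply isUnit_int_of_isCoprime
  apply IsCoprime.mul_left
  · exact (coprime_a_dd n v).of_isCoprime_of_dvd_right
      (Int.natCast_dvd_natCast.mpr (gg_dvd_dd n v))
  · exact (coprime_cc n hn v).of_isCoprime_of_dvd_right
      (Int.natCast_dvd_natCast.mpr (gg_dvd_ndiv n v))

/-- The classification invariant. -/
noncomputable def ff (n : ℕ) (hn : 0 < n) (v : PrimitiveVec) :
    Σ d : {x // x ∈ n.divisors}, (ZMod (Nat.gcd d.1 (n / d.1)))ˣ :=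
  ⟨⟨dd n v, Nat.mem_divisors.mpr ⟨dd_dvd n v, hn.ne'⟩⟩, (isUnit_f n hn v).unit⟩


lemma mulVec_apply0 {M : Matrix (Fin 2) (Fin 2) ℤ} {x : Fin 2 → ℤ} :
    Matrix.mulVec M x 0 = M 0 0 * x 0 + M 0 1 * x 1 := by
  simp [Matrix.mulVec, dotProduct, Fin.sum_univ_two]

lemma mulVec_apply1 {M : Matrix (Fin 2) (Fin 2) ℤ} {x : Fin 2 → ℤ} :
    Matrix.mulVec M x 1 = M 1 0 * x 0 + M 1 1 * x 1 := by
  simp [Matrix.mulVec, dotProduct, Fin.sum_univ_two]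

lemma coe_inv_mulVec (n : ℕ) {γ : Matrix.SpecialLinearGroup (Fin 2) ℤ}
    {v w : PrimitiveVec}
    (h : Matrix.mulVec (γ : Matrix (Fin 2) (Fin 2) ℤ) v.1 = w.1) :
    Matrix.mulVec ((γ⁻¹ : Matrix.SpecialLinearGroup (Fin 2) ℤ) : Matrix (Fin 2) (Fin 2) ℤ)
      w.1 = v.1 := by
  rw [← h, Matrix.mulVec_mulVec, ← Matrix.SpecialLinearGroup.coe_mul, inv_mul_cancel,
    Matrix.SpecialLinearGroup.coe_one, Matrix.one_mulVec]

lemma gamma_dvd_entry (n : ℕ) {γ : Matrix.SpecialLinearGroup (Fin 2) ℤ}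
    (hγ : γ ∈ CongruenceSubgroup.Gamma0 n) :
    (n : ℤ) ∣ (γ : Matrix (Fin 2) (Fin 2) ℤ) 1 0 := by
  have h := CongruenceSubgroup.Gamma0_mem.mp hγ
  rwa [ZMod.intCast_zmod_eq_zero_iff_dvd] at h

lemma det_entries (γ : Matrix.SpecialLinearGroup (Fin 2) ℤ) :
    (γ : Matrix (Fin 2) (Fin 2) ℤ) 0 0 * (γ : Matrix (Fin 2) (Fin 2) ℤ) 1 1
      - (γ : Matrix (Fin 2) (Fin 2) ℤ) 0 1 * (γ : Matrix (Fin 2) (Fin 2) ℤ) 1 0 = 1 := by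
  have h := γ.2
  rwa [Matrix.det_fin_two] at h

lemma dd_dvd_of_gamma (n : ℕ) {γ : Matrix.SpecialLinearGroup (Fin 2) ℤ}
    (hγ : γ ∈ CongruenceSubgroup.Gamma0 n) {v w : PrimitiveVec}
    (h : Matrix.mulVec (γ : Matrix (Fin 2) (Fin 2) ℤ) v.1 = w.1) :
    dd n v ∣ dd n w := by
  obtain ⟨q, hq⟩ := gamma_dvd_entry n hγ
  have hw1 : w.1 1 = (γ : Matrix (Fin 2) (Fin 2) ℤ) 1 0 * v.1 0
      + (γ : Matrix (Fin 2) (Fin 2) ℤ) 1 1 * v.1 1 := by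
    rw [← h]; exact mulVec_apply1
  have h1 : ((dd n v : ℕ) : ℤ) ∣ w.1 1 := by
    rw [hw1]
    refine dvd_add (dvd_mul_of_dvd_left ?_ _) (dvd_mul_of_dvd_right ?_ _)
    · rw [hq]
      exact Dvd.dvd.mul_right (Int.natCast_dvd_natCast.mpr (dd_dvd n v)) q
    · exact Int.gcd_dvd_left _ _
  have h2 : ((dd n v : ℕ) : ℤ) ∣ ((dd n w : ℕ) : ℤ) :=
    Int.dvd_coe_gcd h1 (Int.natCast_dvd_natCast.mpr (dd_dvd n v))
  exact_mod_cast h2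

lemma dd_eq_of_gamma (n : ℕ) {γ : Matrix.SpecialLinearGroup (Fin 2) ℤ}
    (hγ : γ ∈ CongruenceSubgroup.Gamma0 n) {v w : PrimitiveVec}
    (h : Matrix.mulVec (γ : Matrix (Fin 2) (Fin 2) ℤ) v.1 = w.1) :
    dd n v = dd n w :=
  Nat.dvd_antisymm (dd_dvd_of_gamma n hγ h)
    (dd_dvd_of_gamma n (inv_mem hγ) (coe_inv_mulVec n h))

lemma gg_eq_of_dd (n : ℕ) {v w : PrimitiveVec} (h : dd n v = dd n w) : gg n v = gg n w := by
  rw [gg, gg, h]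

lemma cong_of_gamma (n : ℕ) (hn : 0 < n) {γ : Matrix.SpecialLinearGroup (Fin 2) ℤ}
    (hγ : γ ∈ CongruenceSubgroup.Gamma0 n) {v w : PrimitiveVec}
    (h : Matrix.mulVec (γ : Matrix (Fin 2) (Fin 2) ℤ) v.1 = w.1) :
    ((gg n v : ℕ) : ℤ) ∣ (w.1 0 * cc n w - v.1 0 * cc n v) := by
  have hdd := dd_eq_of_gamma n hγ h
  obtain ⟨q, hq⟩ := gamma_dvd_entry n hγ
  have hc : v.1 1 = (dd n v : ℤ) * cc n v := cc_spec n v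
  have hc' : w.1 1 = (dd n v : ℤ) * cc n w := by rw [hdd]; exact cc_spec n w
  have hn' := n_eq n v
  have ha' : w.1 0 = (γ : Matrix (Fin 2) (Fin 2) ℤ) 0 0 * v.1 0
      + (γ : Matrix (Fin 2) (Fin 2) ℤ) 0 1 * v.1 1 := by
    rw [← h]; exact mulVec_apply0
  have hcv : w.1 1 = (γ : Matrix (Fin 2) (Fin 2) ℤ) 1 0 * v.1 0
      + (γ : Matrix (Fin 2) (Fin 2) ℤ) 1 1 * v.1 1 := by
    rw [← h]; exact mulVec_apply1
  have hdet := det_entries γ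
  have hd0 : ((dd n v : ℕ) : ℤ) ≠ 0 := Int.natCast_ne_zero.mpr (dd_pos n hn v).ne'
  have hq10 : (γ : Matrix (Fin 2) (Fin 2) ℤ) 1 0
      = (dd n v : ℤ) * ((n / dd n v : ℕ) : ℤ) * q := by
    linear_combination hq + q * hn'
  have hc12 : cc n w = ((n / dd n v : ℕ) : ℤ) * q * v.1 0
      + (γ : Matrix (Fin 2) (Fin 2) ℤ) 1 1 * cc n v := by
    apply mul_left_cancel₀ hd0
    linear_combination hcv - hc' + v.1 0 * hq + v.1 0 * q * hn'
      + (γ : Matrix (Fin 2) (Fin 2) ℤ) 1 1 * hc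
  have key : w.1 0 * cc n w - v.1 0 * cc n v
      = ((n / dd n v : ℕ) : ℤ) * (q * v.1 0 * w.1 0
          + (γ : Matrix (Fin 2) (Fin 2) ℤ) 0 1 * (dd n v : ℤ) * q * v.1 0 * cc n v)
        + (dd n v : ℤ) * ((γ : Matrix (Fin 2) (Fin 2) ℤ) 0 1
            * (γ : Matrix (Fin 2) (Fin 2) ℤ) 1 1 * cc n v * cc n v) := by
    linear_combination w.1 0 * hc12 + ((γ : Matrix (Fin 2) (Fin 2) ℤ) 1 1 * cc n v) * ha'
      + ((γ : Matrix (Fin 2) (Fin 2) ℤ) 0 1 * (γ : Matrix (Fin 2) (Fin 2) ℤ) 1 1 * cc n v) * hc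
      + (v.1 0 * cc n v) * hdet
      + ((γ : Matrix (Fin 2) (Fin 2) ℤ) 0 1 * v.1 0 * cc n v) * hq10
  rw [key]
  exact dvd_add (dvd_mul_of_dvd_left (Int.natCast_dvd_natCast.mpr (gg_dvd_ndiv n v)) _)
    (dvd_mul_of_dvd_left (Int.natCast_dvd_natCast.mpr (gg_dvd_dd n v)) _)

lemma unit_heq_intro {m k : ℕ} (h : m = k) {z : ℤ} (hu : IsUnit ((z : ZMod m)))
    (u : (ZMod k)ˣ) (hz : ((z : ZMod k)) = (u : ZMod k)) : HEq hu.unit u := by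
  subst h
  exact heq_of_eq (Units.ext (by rw [IsUnit.unit_spec]; exact hz))

lemma unit_heq_of_dvd {m k : ℕ} (h : m = k) {z z' : ℤ} (hu : IsUnit ((z : ZMod m)))
    (hw : IsUnit ((z' : ZMod k))) (hzz : ((m : ℕ) : ℤ) ∣ z' - z) : HEq hu.unit hw.unit := by
  subst h
  refine heq_of_eq (Units.ext ?_)
  rw [IsUnit.unit_spec, IsUnit.unit_spec, ZMod.intCast_eq_intCast_iff]
  exact Int.modEq_iff_dvd.mpr hzz

lemma dvd_of_unit_heq {m k : ℕ} (h : m = k) {z z' : ℤ} (hu : IsUnit ((z : ZMod m)))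
    (hw : IsUnit ((z' : ZMod k))) (H : HEq hu.unit hw.unit) : ((m : ℕ) : ℤ) ∣ z' - z := by
  subst h
  have h2 : ((z : ZMod m)) = ((z' : ZMod m)) := by
    rw [← IsUnit.unit_spec hu, ← IsUnit.unit_spec hw, eq_of_heq H]
  rw [ZMod.intCast_eq_intCast_iff] at h2
  exact Int.ModEq.dvd h2

lemma ff_eq_of_gamma (n : ℕ) (hn : 0 < n) {γ : Matrix.SpecialLinearGroup (Fin 2) ℤ}
    (hγ : γ ∈ CongruenceSubgroup.Gamma0 n) {v w : PrimitiveVec}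
    (h : Matrix.mulVec (γ : Matrix (Fin 2) (Fin 2) ℤ) v.1 = w.1) :
    ff n hn v = ff n hn w := by
  have hdd := dd_eq_of_gamma n hγ h
  refine Sigma.ext (Subtype.ext hdd) ?_
  exact unit_heq_of_dvd (gg_eq_of_dd n hdd) (isUnit_f n hn v) (isUnit_f n hn w)
    (cong_of_gamma n hn hγ h)

lemma ff_surj (n : ℕ) (hn : 0 < n) : Function.Surjective (ff n hn) := by
  rintro ⟨⟨d, hd⟩, u⟩
  obtain ⟨hdvd, hne⟩ := Nat.mem_divisors.mp hd
  have hdpos : 0 < d := Nat.pos_of_dvd_of_pos hdvd hn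
  haveI : NeZero d := ⟨hdpos.ne'⟩
  have hgd : Nat.gcd d (n / d) ∣ d := Nat.gcd_dvd_left _ _
  obtain ⟨x, hx⟩ := ZMod.unitsMap_surjective hgd u
  have hacop : Nat.Coprime ((x : ZMod d)).val d := ZMod.val_coe_unit_coprime x
  have hvc : IsCoprime ((((x : ZMod d)).val : ℕ) : ℤ) ((d : ℤ)) := by
    rw [Int.isCoprime_iff_gcd_eq_one, Int.gcd_natCast_natCast]
    exact hacop
  have hvcop : IsCoprime ((![((((x : ZMod d)).val : ℕ) : ℤ), (d : ℤ)]) 0)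
      ((![((((x : ZMod d)).val : ℕ) : ℤ), (d : ℤ)]) 1) := by simpa using hvc
  set v : PrimitiveVec := ⟨![((((x : ZMod d)).val : ℕ) : ℤ), (d : ℤ)], hvcop⟩ with hvdef
  refine ⟨v, ?_⟩
  have hv0 : v.1 0 = ((((x : ZMod d)).val : ℕ) : ℤ) := rfl
  have hv1 : v.1 1 = (d : ℤ) := rfl
  have hddv : dd n v = d := by
    rw [dd, hv1, Int.gcd_natCast_natCast]
    exact Nat.gcd_eq_left hdvd
  have hccv : cc n v = 1 := by
    rw [cc, hddv, hv1]
    exact Int.ediv_self (Int.natCast_ne_zero.mpr hdpos.ne')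
  refine Sigma.ext (Subtype.ext hddv) ?_
  refine unit_heq_intro (by rw [gg, hddv]) (isUnit_f n hn v) u ?_
  rw [hv0, hccv, mul_one, ← hx, ZMod.unitsMap_def, Units.coe_map]
  push_cast
  rw [ZMod.natCast_val]
  exact (ZMod.castHom_apply (h := hgd) ((x : ZMod d))).symm

lemma exists_gamma (n : ℕ) (hn : 0 < n) (v w : PrimitiveVec) (hd : dd n v = dd n w)
    (hcong : ((gg n v : ℕ) : ℤ) ∣ (w.1 0 * cc n w - v.1 0 * cc n v)) :
    ∃ γ : Matrix.SpecialLinearGroup (Fin 2) ℤ, γ ∈ CongruenceSubgroup.Gamma0 n ∧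
      Matrix.mulVec (γ : Matrix (Fin 2) (Fin 2) ℤ) v.1 = w.1 := by
  obtain ⟨b, e, hb⟩ := v.2
  obtain ⟨b', e', hb'⟩ := w.2
  have hc : v.1 1 = (dd n v : ℤ) * cc n v := cc_spec n v
  have hc' : w.1 1 = (dd n v : ℤ) * cc n w := by rw [hd]; exact cc_spec n w
  have hn' := n_eq n v
  have hd0 : ((dd n v : ℕ) : ℤ) ≠ 0 := Int.natCast_ne_zero.mpr (dd_pos n hn v).ne'
  have key1 : v.1 0 * w.1 0 * (cc n w * b - cc n v * b')
      = (w.1 0 * cc n w - v.1 0 * cc n v)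
        + (dd n v : ℤ) * (v.1 0 * cc n v * e' * cc n w - w.1 0 * cc n w * e * cc n v) := by
    linear_combination (w.1 0 * cc n w) * hb - (v.1 0 * cc n v) * hb'
      + (e' * v.1 0 * cc n v) * hc' - (e * w.1 0 * cc n w) * hc
  have hdvd1 : ((gg n v : ℕ) : ℤ) ∣ v.1 0 * w.1 0 * (cc n w * b - cc n v * b') := by
    rw [key1]
    exact dvd_add hcong (dvd_mul_of_dvd_left (Int.natCast_dvd_natCast.mpr (gg_dvd_dd n v)) _)
  have hcop : IsCoprime (((gg n v : ℕ) : ℤ)) (v.1 0 * w.1 0) := by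
    apply IsCoprime.mul_right
    · exact ((coprime_a_dd n v).of_isCoprime_of_dvd_right
        (Int.natCast_dvd_natCast.mpr (gg_dvd_dd n v))).symm
    · refine ((coprime_a_dd n w).of_isCoprime_of_dvd_right ?_).symm
      exact Int.natCast_dvd_natCast.mpr (hd ▸ gg_dvd_dd n v)
  have hX : ((gg n v : ℕ) : ℤ) ∣ (cc n w * b - cc n v * b') :=
    hcop.dvd_of_dvd_mul_left (by rwa [] at hdvd1)
  have hcopn1 : Nat.Coprime (cc n v).natAbs (n / dd n v) := by
    have h5 := coprime_cc n hn v
    rw [Int.isCoprime_iff_gcd_eq_one, Int.gcd_def, Int.natAbs_natCast] at h5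
    exact h5
  have hcopn1' : Nat.Coprime (cc n w).natAbs (n / dd n v) := by
    have h5 := coprime_cc n hn w
    rw [Int.isCoprime_iff_gcd_eq_one, Int.gcd_def, Int.natAbs_natCast] at h5
    rwa [← hd] at h5
  have hG : Int.gcd (v.1 1 * w.1 1) n = dd n v * gg n v := by
    have e1 : v.1 1 * w.1 1 = (dd n v : ℤ) * (cc n v * w.1 1) := by rw [hc]; ring
    rw [e1, hn', Int.gcd_mul_left, Int.natAbs_natCast]
    congr 1
    rw [Int.gcd_def, Int.natAbs_mul, Int.natAbs_natCast,
      Nat.Coprime.gcd_mul_left_cancel _ hcopn1]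
    have e2 : (w.1 1).natAbs = dd n v * (cc n w).natAbs := by
      rw [hc', Int.natAbs_mul, Int.natAbs_natCast]
    rw [e2, Nat.Coprime.gcd_mul_right_cancel _ hcopn1']
    rfl
  have hdg : ((Int.gcd (v.1 1 * w.1 1) n : ℕ) : ℤ) ∣ (w.1 1 * b - v.1 1 * b') := by
    rw [hG]
    obtain ⟨x, hx⟩ := hX
    refine ⟨x, ?_⟩
    push_cast
    linear_combination b * hc' - b' * hc + ((dd n v : ℕ) : ℤ) * hx
  obtain ⟨s, hs⟩ := hdg
  have hbez := Int.gcd_eq_gcd_ab (v.1 1 * w.1 1) (n : ℤ)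
  set t : ℤ := Int.gcdA (v.1 1 * w.1 1) (n : ℤ) * s with ht
  have hnd : (n : ℤ) ∣ (w.1 1 * b - v.1 1 * b') - t * (v.1 1 * w.1 1) :=
    ⟨s * Int.gcdB (v.1 1 * w.1 1) (n : ℤ), by linear_combination hs + s * hbez⟩
  have detA' : (!![w.1 0, -e'; w.1 1, b'] : Matrix (Fin 2) (Fin 2) ℤ).det = 1 := by
    rw [Matrix.det_fin_two_of]; linear_combination hb'
  have detV : (!![1, t; 0, 1] : Matrix (Fin 2) (Fin 2) ℤ).det = 1 := by
    rw [Matrix.det_fin_two_of]; ring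
  have detAi : (!![b, e; -(v.1 1), v.1 0] : Matrix (Fin 2) (Fin 2) ℤ).det = 1 := by
    rw [Matrix.det_fin_two_of]; linear_combination hb
  set γ : Matrix.SpecialLinearGroup (Fin 2) ℤ :=
    ⟨_, detA'⟩ * ⟨_, detV⟩ * ⟨_, detAi⟩ with hγdef
  have hcoe : (γ : Matrix (Fin 2) (Fin 2) ℤ)
      = !![w.1 0, -e'; w.1 1, b'] * !![1, t; 0, 1] * !![b, e; -(v.1 1), v.1 0] := rfl
  have h10 : (γ : Matrix (Fin 2) (Fin 2) ℤ) 1 0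
      = w.1 1 * b + (w.1 1 * t + b') * (-(v.1 1)) := by
    rw [hcoe, Matrix.mul_fin_two, Matrix.mul_fin_two]
    simp
    all_goals ring
  refine ⟨γ, ?_, ?_⟩
  · rw [CongruenceSubgroup.Gamma0_mem]
    show (((γ : Matrix (Fin 2) (Fin 2) ℤ) 1 0 : ℤ) : ZMod n) = 0
    rw [ZMod.intCast_zmod_eq_zero_iff_dvd, h10]
    obtain ⟨u0, hu0⟩ := hnd
    exact ⟨u0, by linear_combination hu0⟩
  · funext i
    fin_cases i
    · show Matrix.mulVec (γ : Matrix (Fin 2) (Fin 2) ℤ) v.1 0 = w.1 0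
      rw [hcoe, Matrix.mul_fin_two, Matrix.mul_fin_two]
      simp [Matrix.mulVec, dotProduct, Fin.sum_univ_two, Matrix.vecHead, Matrix.vecTail]
      all_goals linear_combination w.1 0 * hb
    · show Matrix.mulVec (γ : Matrix (Fin 2) (Fin 2) ℤ) v.1 1 = w.1 1
      rw [hcoe, Matrix.mul_fin_two, Matrix.mul_fin_two]
      simp [Matrix.mulVec, dotProduct, Fin.sum_univ_two, Matrix.vecHead, Matrix.vecTail]
      all_goals linear_combination w.1 1 * hb

end CuspsAux

/-- The number of cusps of `Γ₀(n)`, i.e. the number of orbits of `Γ₀(n)` acting on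
`ℚ ∪ {∞}` (equivalently, on primitive vectors in `ℤ²`), equals
`Σ_{c | n} φ(gcd(c, n/c))`. -/
theorem card_cusps_Gamma0 (n : ℕ) (hn : 0 < n)
    (r : PrimitiveVec → PrimitiveVec → Prop)
    (hr : ∀ v w : PrimitiveVec, r v w ↔
      ∃ γ : Matrix.SpecialLinearGroup (Fin 2) ℤ, γ ∈ CongruenceSubgroup.Gamma0 n ∧
        Matrix.mulVec (γ : Matrix (Fin 2) (Fin 2) ℤ) v.1 = w.1) :
    Nat.card (Quot r) = ∑ c ∈ n.divisors, Nat.totient (Nat.gcd c (n / c)) := by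
  classical
  haveI I1 : ∀ d : {x // x ∈ n.divisors}, NeZero (Nat.gcd d.1 (n / d.1)) := fun d => by
    obtain ⟨hdvd, -⟩ := Nat.mem_divisors.mp d.2
    exact ⟨(Nat.gcd_pos_of_pos_left _ (Nat.pos_of_dvd_of_pos hdvd hn)).ne'⟩
  have hresp : ∀ v w : PrimitiveVec, r v w → CuspsAux.ff n hn v = CuspsAux.ff n hn w := by
    intro v w hvw
    obtain ⟨γ, hγ, hmv⟩ := (hr v w).mp hvw
    exact CuspsAux.ff_eq_of_gamma n hn hγ hmv
  set F : Quot r → Σ d : {x // x ∈ n.divisors}, (ZMod (Nat.gcd d.1 (n / d.1)))ˣ :=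
    Quot.lift (CuspsAux.ff n hn) hresp with hF
  have hFsurj : Function.Surjective F := by
    intro y
    obtain ⟨v, hv⟩ := CuspsAux.ff_surj n hn y
    exact ⟨Quot.mk r v, hv⟩
  have hFinj : Function.Injective F := by
    intro x y
    refine Quot.induction_on₂ x y ?_
    intro v w hf0
    have hf : CuspsAux.ff n hn v = CuspsAux.ff n hn w := hf0
    have h1 : CuspsAux.dd n v = CuspsAux.dd n w := congrArg (fun s => s.1.1) hf
    have h2 : HEq (CuspsAux.ff n hn v).2 (CuspsAux.ff n hn w).2 := by rw [hf]
    have h3 : ((CuspsAux.gg n v : ℕ) : ℤ)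
        ∣ (w.1 0 * CuspsAux.cc n w - v.1 0 * CuspsAux.cc n v) :=
      CuspsAux.dvd_of_unit_heq (CuspsAux.gg_eq_of_dd n h1) (CuspsAux.isUnit_f n hn v)
        (CuspsAux.isUnit_f n hn w) h2
    obtain ⟨γ, hγ, hmv⟩ := CuspsAux.exists_gamma n hn v w h1 h3
    exact Quot.sound ((hr v w).mpr ⟨γ, hγ, hmv⟩)
  rw [Nat.card_eq_of_bijective F ⟨hFinj, hFsurj⟩]
  rw [Nat.card_eq_fintype_card, Fintype.card_sigma]
  rw [Finset.sum_congr rfl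
    (fun d _ => (ZMod.card_units_eq_totient (Nat.gcd d.1 (n / d.1)) : _))]
  exact Finset.sum_coe_sort n.divisors (fun c => (Nat.gcd c (n / c)).totient)
end

section
/- For every positive integer n and every divisor c of n with c < n, (1/φ(n))·Σ_{k | n, k > 1} k·μ(n/k)·(1 − gcd(k,c)²/k) = 1. Equivalently, Σ_{k|n} k·μ(n/k) − Σ_{k|n} μ(n/k)·gcd(k,c)² = φ(n) when c is a proper divisor of n. -/
open Finset ArithmeticFunction
open scoped ArithmeticFunction.Moebius

private lemma div_dvd_div_of_dvd_of_dvd' {n a b : ℕ} (hn : n ≠ 0) (hab : a ∣ b) (hbn : b ∣ n) :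
    n / b ∣ n / a := by
  have hb0 : b ≠ 0 := by rintro rfl; exact hn (Nat.eq_zero_of_zero_dvd hbn)
  refine ⟨b / a, ?_⟩
  rw [Nat.div_mul_div_comm hbn hab, mul_comm n b, Nat.mul_div_mul_left _ _ (Nat.pos_of_ne_zero hb0)]

private lemma sum_moebius_div_eq' (N : ℕ) :
    ∑ e ∈ N.divisors, (ArithmeticFunction.moebius e : ℚ) = if N = 1 then 1 else 0 := by
  have h : ∑ e ∈ N.divisors, (ArithmeticFunction.moebius e : ℤ) = if N = 1 then 1 else 0 := by
    have := ArithmeticFunction.coe_mul_zeta_apply (f := (μ : ArithmeticFunction ℤ)) (x := N)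
    rw [moebius_mul_coe_zeta] at this
    rw [← this]
    simp [ArithmeticFunction.one_apply]
  have := congrArg (Int.cast : ℤ → ℚ) h
  push_cast at this
  exact this

private lemma totient_eq_sum' (n : ℕ) (hn : 0 < n) :
    (Nat.totient n : ℚ) = ∑ k ∈ n.divisors, (μ (n / k) : ℚ) * (k : ℚ) := by
  have h := (ArithmeticFunction.sum_eq_iff_sum_mul_moebius_eq
      (R := ℚ) (f := fun i => (Nat.totient i : ℚ)) (g := fun i => (i : ℚ))).mp
    (fun m _ => by exact_mod_cast congrArg (Nat.cast : ℕ → ℚ) (Nat.sum_totient m)) n hn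
  rw [← h, Nat.sum_divisorsAntidiagonal' (f := fun a b => (μ a : ℚ) * (b : ℚ))]

private noncomputable def Jq (d : ℕ) : ℚ :=
  ∑ x ∈ d.divisorsAntidiagonal, (μ x.1 : ℚ) * (x.2 : ℚ) ^ 2

private lemma sum_Jq (m : ℕ) (hm : 0 < m) : ∑ d ∈ m.divisors, Jq d = (m : ℚ) ^ 2 := by
  exact (ArithmeticFunction.sum_eq_iff_sum_mul_moebius_eq
      (R := ℚ) (f := Jq) (g := fun i => (i : ℚ) ^ 2)).mpr (fun N _ => rfl) m hm

private lemma key_inner (n d : ℕ) (hn : n ≠ 0) (hd : d ∣ n) (hdn : d ≠ n) :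
    ∑ k ∈ n.divisors, (if d ∣ k then (μ (n / k) : ℚ) else 0) = 0 := by
  have hstep : ∀ k ∈ n.divisors,
      (if d ∣ k then (μ (n / k) : ℚ) else 0)
        = (if (n / k) ∣ (n / d) then (μ (n / k) : ℚ) else 0) := by
    intro k hk
    obtain ⟨hkn, -⟩ := Nat.mem_divisors.mp hk
    refine if_congr ?_ rfl rfl
    constructor
    · intro h; exact div_dvd_div_of_dvd_of_dvd' hn h hkn
    · intro h
      have := div_dvd_div_of_dvd_of_dvd' hn h (Nat.div_dvd_of_dvd hd)
      rwa [Nat.div_div_self hd hn, Nat.div_div_self hkn hn] at this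
  rw [Finset.sum_congr rfl hstep,
    Nat.sum_div_divisors n (fun j => if j ∣ n / d then (μ j : ℚ) else 0), ← Finset.sum_filter,
    Nat.divisors_filter_dvd_of_dvd hn (Nat.div_dvd_of_dvd hd), sum_moebius_div_eq',
    if_neg]
  intro h1
  apply hdn
  have h2 := Nat.div_mul_cancel hd
  rw [h1, one_mul] at h2
  exact h2

private lemma key_sum (n c : ℕ) (hn : 0 < n) (hc : c ∣ n) (hcn : c < n) :
    ∑ k ∈ n.divisors, (μ (n / k) : ℚ) * (Nat.gcd k c : ℚ) ^ 2 = 0 := by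
  have hn0 : n ≠ 0 := hn.ne'
  have hc0 : c ≠ 0 := by rintro rfl; exact hn0 (Nat.eq_zero_of_zero_dvd hc)
  have hgcd : ∀ k ∈ n.divisors,
      (μ (n / k) : ℚ) * (Nat.gcd k c : ℚ) ^ 2
        = ∑ d ∈ c.divisors, (if d ∣ k then (μ (n / k) : ℚ) * Jq d else 0) := by
    intro k hk
    have hk0 : k ≠ 0 := (Nat.pos_of_mem_divisors hk).ne'
    have hg0 : 0 < Nat.gcd k c := Nat.gcd_pos_of_pos_left _ (Nat.pos_of_ne_zero hk0)
    have hfil : c.divisors.filter (fun d => d ∣ k) = (Nat.gcd k c).divisors := by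
      rw [← Nat.divisors_filter_dvd_of_dvd hc0 (Nat.gcd_dvd_right k c)]
      apply Finset.filter_congr
      intro d hd
      have hdc : d ∣ c := (Nat.mem_divisors.mp hd).1
      constructor
      · intro h; exact Nat.dvd_gcd h hdc
      · intro h; exact h.trans (Nat.gcd_dvd_left k c)
    calc (μ (n / k) : ℚ) * (Nat.gcd k c : ℚ) ^ 2
        = (μ (n / k) : ℚ) * ∑ d ∈ (Nat.gcd k c).divisors, Jq d := by rw [sum_Jq _ hg0]
      _ = ∑ d ∈ c.divisors.filter (fun d => d ∣ k), (μ (n / k) : ℚ) * Jq d := by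
          rw [hfil, Finset.mul_sum]
      _ = ∑ d ∈ c.divisors, (if d ∣ k then (μ (n / k) : ℚ) * Jq d else 0) := by
          rw [Finset.sum_filter]
  rw [Finset.sum_congr rfl hgcd, Finset.sum_comm]
  apply Finset.sum_eq_zero
  intro d hd
  obtain ⟨hdc, -⟩ := Nat.mem_divisors.mp hd
  have hdn : d ≠ n := by
    have : d ≤ c := Nat.le_of_dvd (Nat.pos_of_ne_zero hc0) hdc
    omega
  have := key_inner n d hn0 (hdc.trans hc) hdn
  calc ∑ k ∈ n.divisors, (if d ∣ k then (μ (n / k) : ℚ) * Jq d else 0)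
      = ∑ k ∈ n.divisors, (if d ∣ k then (μ (n / k) : ℚ) else 0) * Jq d := by
        apply Finset.sum_congr rfl; intro k _; split <;> simp
    _ = (∑ k ∈ n.divisors, (if d ∣ k then (μ (n / k) : ℚ) else 0)) * Jq d := by
        rw [Finset.sum_mul]
    _ = 0 := by rw [this, zero_mul]

/-- For every positive integer `n` and every divisor `c` of `n` with `c < n`,
`(1/φ(n)) · Σ_{k | n, k > 1} k·μ(n/k)·(1 − gcd(k,c)²/k) = 1`. -/
theorem constant_term_other_cusps (n c : ℕ) (hn : 0 < n) (hc : c ∣ n) (hcn : c < n) :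
    (1 / (Nat.totient n : ℚ)) *
      ∑ k ∈ n.divisors.filter (fun k => 1 < k),
        (k : ℚ) * (ArithmeticFunction.moebius (n / k) : ℚ) *
          (1 - (Nat.gcd k c : ℚ) ^ 2 / (k : ℚ)) = 1 := by
  have hn0 : n ≠ 0 := hn.ne'
  have hfull : ∑ k ∈ n.divisors.filter (fun k => 1 < k),
      (k : ℚ) * (μ (n / k) : ℚ) * (1 - (Nat.gcd k c : ℚ) ^ 2 / (k : ℚ))
      = ∑ k ∈ n.divisors,
      (k : ℚ) * (μ (n / k) : ℚ) * (1 - (Nat.gcd k c : ℚ) ^ 2 / (k : ℚ)) := by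
    rw [← Finset.sum_filter_add_sum_filter_not n.divisors (fun k => 1 < k)]
    have : n.divisors.filter (fun k => ¬ 1 < k) = {1} := by
      ext k
      simp only [Finset.mem_filter, Nat.mem_divisors, Finset.mem_singleton]
      constructor
      · rintro ⟨⟨hk, -⟩, h⟩
        have : k ≠ 0 := by rintro rfl; exact hn0 (Nat.eq_zero_of_zero_dvd hk)
        omega
      · rintro rfl; exact ⟨⟨one_dvd n, hn0⟩, by omega⟩
    rw [this]
    simp
  have hsplit : ∀ k ∈ n.divisors,
      (k : ℚ) * (μ (n / k) : ℚ) * (1 - (Nat.gcd k c : ℚ) ^ 2 / (k : ℚ))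
        = (μ (n / k) : ℚ) * (k : ℚ) - (μ (n / k) : ℚ) * (Nat.gcd k c : ℚ) ^ 2 := by
    intro k hk
    have hk0 : (k : ℚ) ≠ 0 := Nat.cast_ne_zero.mpr (Nat.pos_of_mem_divisors hk).ne'
    field_simp
  rw [hfull, Finset.sum_congr rfl hsplit, Finset.sum_sub_distrib, key_sum n c hn hc hcn,
    sub_zero, ← totient_eq_sum' n hn, one_div, inv_mul_cancel₀]
  exact Nat.cast_ne_zero.mpr (Nat.totient_pos.mpr hn).ne'
end

section
/- For divisors c of n with c a proper divisor (c < n, c | n), Σ_{k | n} μ(n/k)·gcd(k,c)² = 0. -/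
open Finset ArithmeticFunction

private def J2 : ℕ → ℤ := fun e => ∑ d ∈ e.divisors, moebius (e / d) * (d : ℤ) ^ 2

private lemma sum_J2 : ∀ m : ℕ, 0 < m → ∑ e ∈ m.divisors, J2 e = (m : ℤ) ^ 2 := by
  apply (ArithmeticFunction.sum_eq_iff_sum_smul_moebius_eq
    (f := J2) (g := fun m => (m : ℤ) ^ 2)).mpr
  intro n hn
  rw [Nat.sum_divisorsAntidiagonal' (f := fun a b => moebius a • ((b : ℤ) ^ 2))]
  simp [J2, zsmul_eq_mul]

/-- For every proper divisor `c` of `n` (`c | n`, `c < n`),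
`Σ_{k | n} μ(n/k)·gcd(k,c)² = 0`. -/
theorem sum_moebius_gcd_sq_eq_zero (n c : ℕ) (hn : 0 < n) (hc : c ∣ n) (hcn : c < n) :
    (∑ k ∈ n.divisors, ArithmeticFunction.moebius (n / k) * (Nat.gcd k c : ℤ) ^ 2) = 0 := by
  have hc0 : 0 < c := by
    rcases Nat.eq_zero_or_pos c with h | h
    · subst h; exact absurd (Nat.eq_zero_of_zero_dvd hc) hn.ne'
    · exact h
  set f : ℕ → ℤ := fun e => if e ∣ c then J2 e else 0 with hf
  have key : ∀ k > 0, ∑ e ∈ k.divisors, f e = (Nat.gcd k c : ℤ) ^ 2 := by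
    intro k hk
    rw [hf, ← Finset.sum_filter]
    have hfe : k.divisors.filter (· ∣ c) = (Nat.gcd k c).divisors := by
      ext e
      simp only [Finset.mem_filter, Nat.mem_divisors, Nat.dvd_gcd_iff]
      constructor
      · rintro ⟨⟨h1, _⟩, h2⟩
        exact ⟨⟨h1, h2⟩, Nat.gcd_ne_zero_left hk.ne'⟩
      · rintro ⟨⟨h1, h2⟩, _⟩
        exact ⟨⟨h1, hk.ne'⟩, h2⟩
    rw [hfe]
    exact sum_J2 _ (Nat.gcd_pos_of_pos_left c hk)
  have main := (ArithmeticFunction.sum_eq_iff_sum_smul_moebius_eq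
    (f := f) (g := fun k => (Nat.gcd k c : ℤ) ^ 2)).mp key n hn
  have hndc : ¬ n ∣ c := fun h => absurd (Nat.le_of_dvd hc0 h) (not_le.mpr hcn)
  rw [hf] at main
  simp only [hndc, if_false] at main
  rw [← main, Nat.sum_divisorsAntidiagonal'
    (f := fun a b => moebius a • ((Nat.gcd b c : ℤ) ^ 2))]
  simp [zsmul_eq_mul]
end

section
/- The multiplicative identity: Σ_{c | n} (1/gcd(c,n/c)) · Σ_{k | n, gcd(k,c)=gcd(c,n/c)} μ(n/k)·gcd(k,c)²·σ_ℤ(k/gcd(k,c)²)·μ(gcd(c,n/c)) = φ(n), where σ_ℤ(x) = σ(x) if x is a positive integer and 0 otherwise. Equivalently: Σ_{c | n} (μ(gcd(c,n/c))/gcd(c,n/c)) · Σ_{k | n} μ(n/k)·gcd(k,c)²·σ_ℤ(k/gcd(k,c)²) = φ(n). -/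
open Finset ArithmeticFunction
open scoped ArithmeticFunction.sigma

/-- The sum-of-divisors function extended to positive rationals:
`σ_ℤ(x) = σ(x)` if `x` is a positive integer, and `0` otherwise. -/
noncomputable def sigmaZ (x : ℚ) : ℚ :=
  if x.den = 1 ∧ 0 < x.num then (∑ d ∈ (x.num.toNat).divisors, (d : ℚ)) else 0

/-- The integer-valued version of `gcd(k,c)² σ_ℤ(k/gcd(k,c)²)`. -/
def Fint (c : ℕ) : ArithmeticFunction ℤ :=
  ⟨fun k => if (Nat.gcd k c) ^ 2 ∣ k
      then (((Nat.gcd k c) ^ 2 * (σ 1) (k / (Nat.gcd k c) ^ 2) : ℕ) : ℤ) else 0, by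
    simp⟩

lemma Fint_apply (c k : ℕ) :
    Fint c k = if (Nat.gcd k c) ^ 2 ∣ k
      then (((Nat.gcd k c) ^ 2 * (σ 1) (k / (Nat.gcd k c) ^ 2) : ℕ) : ℤ) else 0 := rfl

lemma Fint_one (c : ℕ) : Fint c 1 = 1 := by
  simp [Fint_apply, ArithmeticFunction.isMultiplicative_sigma.map_one]

lemma Fint_congr {c c' k : ℕ} (h : Nat.gcd k c = Nat.gcd k c') : Fint c k = Fint c' k := by
  simp [Fint_apply, h]

lemma Fint_isMult (c : ℕ) : (Fint c).IsMultiplicative := by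
  constructor
  · exact Fint_one c
  · intro m n hmn
    rcases eq_or_ne m 0 with rfl | hm
    · rw [Nat.coprime_zero_left] at hmn
      subst hmn; simp [Fint_one, Fint_apply]
    rcases eq_or_ne n 0 with rfl | hn
    · rw [Nat.coprime_zero_right] at hmn
      subst hmn; simp [Fint_one, Fint_apply]
    set g1 := Nat.gcd m c with hg1
    set g2 := Nat.gcd n c with hg2
    have hgm : Nat.gcd (m * n) c = g1 * g2 := by
      rw [Nat.gcd_comm (m * n) c, hmn.gcd_mul c, Nat.gcd_comm c m, Nat.gcd_comm c n]
    have hcop12 : Nat.Coprime g1 g2 :=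
      Nat.Coprime.coprime_dvd_right (Nat.gcd_dvd_left n c)
        (Nat.Coprime.coprime_dvd_left (Nat.gcd_dvd_left m c) hmn)
    have hdvd : (g1 * g2) ^ 2 ∣ m * n ↔ g1 ^ 2 ∣ m ∧ g2 ^ 2 ∣ n := by
      constructor
      · intro h
        have h1 : g1 ^ 2 ∣ m := by
          have : g1 ^ 2 ∣ m * n := dvd_trans (by rw [mul_pow]; exact dvd_mul_right _ _) h
          exact (Nat.Coprime.pow_left 2
            (Nat.Coprime.coprime_dvd_left (Nat.gcd_dvd_left m c) hmn)).dvd_of_dvd_mul_right this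
        have h2 : g2 ^ 2 ∣ n := by
          have h' : g2 ^ 2 ∣ n * m := by
            rw [mul_comm]; exact dvd_trans (by rw [mul_pow]; exact dvd_mul_left _ _) h
          exact (Nat.Coprime.pow_left 2
            (Nat.Coprime.coprime_dvd_left (Nat.gcd_dvd_left n c) hmn.symm)).dvd_of_dvd_mul_right h'
        exact ⟨h1, h2⟩
      · rintro ⟨h1, h2⟩
        rw [mul_pow]
        exact mul_dvd_mul h1 h2
    rw [Fint_apply, Fint_apply, Fint_apply, hgm]
    by_cases h : g1 ^ 2 ∣ m ∧ g2 ^ 2 ∣ n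
    · rw [if_pos (hdvd.mpr h), if_pos h.1, if_pos h.2]
      have hquot : m * n / (g1 * g2) ^ 2 = (m / g1 ^ 2) * (n / g2 ^ 2) := by
        rw [mul_pow, ← Nat.div_mul_div_comm h.1 h.2]
      have hcq : Nat.Coprime (m / g1 ^ 2) (n / g2 ^ 2) :=
        Nat.Coprime.coprime_dvd_right (Nat.div_dvd_of_dvd h.2)
          (Nat.Coprime.coprime_dvd_left (Nat.div_dvd_of_dvd h.1) hmn)
      rw [hquot, isMultiplicative_sigma.map_mul_of_coprime hcq]
      push_cast
      ring
    · rw [if_neg (fun hh => h (hdvd.mp hh))]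
      rcases Decidable.not_and_iff_or_not.mp h with h1 | h1 <;>
        simp only [← hg1, ← hg2, if_neg h1, zero_mul, mul_zero]

/-- `W c = μ * Fint c` (Dirichlet convolution). -/
def W (c : ℕ) : ArithmeticFunction ℤ := (moebius : ArithmeticFunction ℤ) * Fint c

lemma W_apply (c n : ℕ) :
    W c n = ∑ k ∈ n.divisors, (moebius (n / k) : ℤ) * Fint c k := by
  rw [W, mul_apply, ← Nat.sum_divisorsAntidiagonal' (f := fun a b => (moebius a : ℤ) * Fint c b)]

lemma W_isMult (c : ℕ) : (W c).IsMultiplicative :=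
  isMultiplicative_moebius.mul (Fint_isMult c)

lemma gcd_pow_pow_s15 {p : ℕ} (hp : p.Prime) (a b : ℕ) :
    Nat.gcd (p ^ a) (p ^ b) = p ^ min a b := by
  rcases le_total a b with h | h
  · rw [Nat.gcd_eq_left (pow_dvd_pow p h), min_eq_left h]
  · rw [Nat.gcd_eq_right (pow_dvd_pow p h), min_eq_right h]

lemma Fint_pp {p : ℕ} (hp : p.Prime) (γ i : ℕ) :
    Fint (p ^ γ) (p ^ i) = if 2 * min i γ ≤ i
      then ((p ^ (2 * min i γ) * (σ 1) (p ^ (i - 2 * min i γ)) : ℕ) : ℤ) else 0 := by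
  rw [Fint_apply, gcd_pow_pow_s15 hp, ← pow_mul, mul_comm (min i γ) 2]
  split_ifs with h h' h'
  · rw [Nat.pow_div ((Nat.pow_dvd_pow_iff_le_right hp.one_lt).mp h) hp.pos]
  · exact absurd ((Nat.pow_dvd_pow_iff_le_right hp.one_lt).mp h) h'
  · exact absurd ((Nat.pow_dvd_pow_iff_le_right hp.one_lt).mpr h') h
  · rfl

lemma Fint_pp_small {p : ℕ} (hp : p.Prime) {γ i : ℕ} (h1 : 1 ≤ i) (h2 : i ≤ γ) :
    Fint (p ^ γ) (p ^ i) = 0 := by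
  rw [Fint_pp hp, min_eq_left h2, if_neg]
  omega

lemma Fint_pp_large {p : ℕ} (hp : p.Prime) {γ i : ℕ} (h : γ ≤ i) :
    Fint (p ^ γ) (p ^ i) = if 2 * γ ≤ i
      then ((p ^ (2 * γ) * (σ 1) (p ^ (i - 2 * γ)) : ℕ) : ℤ) else 0 := by
  rw [Fint_pp hp, min_eq_right h]

lemma W_pp {p : ℕ} (hp : p.Prime) (γ : ℕ) {e : ℕ} (he : 1 ≤ e) :
    W (p ^ γ) (p ^ e) = Fint (p ^ γ) (p ^ e) - Fint (p ^ γ) (p ^ (e - 1)) := by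
  obtain ⟨d, rfl⟩ : ∃ d, e = d + 1 := ⟨e - 1, by omega⟩
  rw [W_apply, Nat.sum_divisors_prime_pow hp]
  have hcongr : ∀ i ∈ Finset.range (d + 1 + 1),
      (moebius (p ^ (d + 1) / p ^ i) : ℤ) * Fint (p ^ γ) (p ^ i)
        = (moebius (p ^ (d + 1 - i)) : ℤ) * Fint (p ^ γ) (p ^ i) := by
    intro i hi
    rw [Finset.mem_range] at hi
    rw [Nat.pow_div (by omega) hp.pos]
  rw [Finset.sum_congr rfl hcongr, Finset.sum_range_succ, Finset.sum_range_succ]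
  have hzero : ∑ i ∈ Finset.range d, (moebius (p ^ (d + 1 - i)) : ℤ) * Fint (p ^ γ) (p ^ i) = 0 := by
    apply Finset.sum_eq_zero
    intro i hi
    rw [Finset.mem_range] at hi
    rw [moebius_apply_prime_pow hp (by omega : d + 1 - i ≠ 0), if_neg (by omega)]
    ring
  rw [hzero]
  have h1 : d + 1 - d = 1 := by omega
  have h2 : d + 1 - (d + 1) = 0 := by omega
  rw [h1, h2, pow_zero, pow_one, moebius_apply_one, moebius_apply_prime hp, Nat.add_sub_cancel]
  ring

lemma sigma_pp_succ {p : ℕ} (hp : p.Prime) (d : ℕ) :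
    (σ 1) (p ^ (d + 1)) = (σ 1) (p ^ d) + p ^ (d + 1) := by
  rw [sigma_one_apply_prime_pow hp, sigma_one_apply_prime_pow hp, Finset.sum_range_succ]

lemma key_pp {p : ℕ} (hp : p.Prime) {e γ : ℕ} (he : 1 ≤ e) (hγ : γ ≤ e) :
    (moebius (p ^ min γ (e - γ)) : ℤ) * W (p ^ γ) (p ^ e)
      = (moebius (p ^ γ) : ℤ) * (p : ℤ) ^ (e - γ) * (p : ℤ) ^ min γ (e - γ) := by
  rw [W_pp hp γ he]
  rcases Nat.eq_zero_or_pos γ with rfl | hγ1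
  · -- γ = 0
    obtain ⟨d, rfl⟩ : ∃ d, e = d + 1 := ⟨e - 1, by omega⟩
    have hW : Fint (p ^ 0) (p ^ (d + 1)) - Fint (p ^ 0) (p ^ (d + 1 - 1)) = (p : ℤ) ^ (d + 1) := by
      rw [Fint_pp_large hp (Nat.zero_le _), Fint_pp_large hp (Nat.zero_le _),
        if_pos (by omega : 2 * 0 ≤ d + 1), if_pos (by omega : 2 * 0 ≤ d + 1 - 1)]
      simp only [Nat.add_sub_cancel, Nat.mul_zero, pow_zero, one_mul, Nat.sub_zero]
      rw [sigma_pp_succ hp d]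
      push_cast
      ring
    rw [hW]
    have hmin : min 0 (d + 1 - 0) = 0 := by omega
    rw [hmin, pow_zero, moebius_apply_one]
    simp
  · rcases le_or_gt (2 * γ) e with hA | hB
    · -- 2γ ≤ e : W = p^e
      have hγe1 : γ ≤ e - 1 := by omega
      have hW : Fint (p ^ γ) (p ^ e) - Fint (p ^ γ) (p ^ (e - 1)) = (p : ℤ) ^ e := by
        rw [Fint_pp_large hp hγ, if_pos hA, Fint_pp_large hp hγe1]
        rcases lt_or_ge (e - 1) (2 * γ) with h2 | h2
        · have he2 : e = 2 * γ := by omega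
          rw [if_neg (by omega)]
          subst he2
          simp only [Nat.sub_self, pow_zero]
          rw [isMultiplicative_sigma.map_one]
          push_cast
          ring
        · rw [if_pos h2]
          have hd : e - 2 * γ = (e - 1 - 2 * γ) + 1 := by omega
          rw [hd, sigma_pp_succ hp]
          have hpe : (p : ℤ) ^ (2 * γ) * (p : ℤ) ^ (e - 1 - 2 * γ + 1) = (p : ℤ) ^ e := by
            rw [← pow_add]; congr 1; omega
          push_cast
          linear_combination hpe
      rw [hW]
      have hmin : min γ (e - γ) = γ := by omega
      have hpe : (p : ℤ) ^ (e - γ) * (p : ℤ) ^ γ = (p : ℤ) ^ e := by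
        rw [← pow_add]; congr 1; omega
      rw [hmin, mul_assoc, hpe]
    · -- e < 2γ
      rcases Nat.eq_or_lt_of_le hγ1 with hγ2 | hγ2
      · -- γ = 1, hence e = 1
        have hγ' : γ = 1 := hγ2.symm
        have he' : e = 1 := by omega
        subst hγ' he'
        have h1 : Fint (p ^ 1) (p ^ 1) = 0 := Fint_pp_small hp (le_refl 1) (le_refl 1)
        have hmin : min 1 (1 - 1) = 0 := by omega
        rw [hmin, pow_zero, moebius_apply_one]
        simp only [pow_one] at h1 ⊢
        rw [h1, Fint_one, moebius_apply_prime hp]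
        norm_num
      · -- γ ≥ 2 : both sides vanish
        have hWz : Fint (p ^ γ) (p ^ e) - Fint (p ^ γ) (p ^ (e - 1)) = 0 := by
          have h1 : Fint (p ^ γ) (p ^ e) = 0 := by
            rw [Fint_pp_large hp hγ, if_neg (by omega)]
          have h2 : Fint (p ^ γ) (p ^ (e - 1)) = 0 := by
            rcases le_or_gt γ (e - 1) with h | h
            · rw [Fint_pp_large hp h, if_neg (by omega)]
            · exact Fint_pp_small hp (by omega) (by omega)
          rw [h1, h2, sub_zero]
        rw [hWz, mul_zero, moebius_apply_prime_pow hp (by omega), if_neg (by omega)]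
        ring

lemma key_s15 : ∀ n : ℕ, 0 < n → ∀ c, c ∣ n →
    (moebius (Nat.gcd c (n / c)) : ℤ) * W c n
      = (moebius c : ℤ) * ((n / c : ℕ) : ℤ) * ((Nat.gcd c (n / c) : ℕ) : ℤ) := by
  intro n
  induction n using Nat.recOnPosPrimePosCoprime with
  | prime_pow p k hpk hk =>
    intro _ c hc
    have hp' : p.Prime := hpk
    obtain ⟨γ, hγ, rfl⟩ := (Nat.dvd_prime_pow hp').mp hc
    rw [Nat.pow_div hγ hp'.pos, gcd_pow_pow_s15 hp']
    push_cast
    exact key_pp hp' hk hγ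
  | zero =>
    intro h
    exact absurd h (by norm_num)
  | one =>
    intro _ c hc
    rw [Nat.dvd_one] at hc
    subst hc
    simp [W_apply, Fint_one]
  | coprime a b ha hb hab iha ihb =>
    intro _ c hc
    have ha0 : 0 < a := by omega
    have hb0 : 0 < b := by omega
    set c₁ := Nat.gcd c a with hc₁
    set c₂ := Nat.gcd c b with hc₂
    have h1a : c₁ ∣ a := Nat.gcd_dvd_right c a
    have h2b : c₂ ∣ b := Nat.gcd_dvd_right c b
    have hc12 : c₁ * c₂ = c := ((hab.gcd_mul c).symm).trans (Nat.gcd_eq_left hc)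
    have hc1c2 : Nat.Coprime c₁ c₂ := (hab.coprime_dvd_left h1a).coprime_dvd_right h2b
    have hcuv : Nat.Coprime (a / c₁) (b / c₂) :=
      (hab.coprime_dvd_left (Nat.div_dvd_of_dvd h1a)).coprime_dvd_right (Nat.div_dvd_of_dvd h2b)
    have hc2u : Nat.Coprime c₂ (a / c₁) :=
      (hab.symm.coprime_dvd_left h2b).coprime_dvd_right (Nat.div_dvd_of_dvd h1a)
    have hc1v : Nat.Coprime c₁ (b / c₂) :=
      (hab.coprime_dvd_left h1a).coprime_dvd_right (Nat.div_dvd_of_dvd h2b)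
    have hquot : a * b / c = (a / c₁) * (b / c₂) := by
      rw [← hc12, ← Nat.div_mul_div_comm h1a h2b]
    have hgcd : Nat.gcd c (a * b / c) = Nat.gcd c₁ (a / c₁) * Nat.gcd c₂ (b / c₂) := by
      rw [hquot, ← hc12, hcuv.gcd_mul (c₁ * c₂),
        hc2u.gcd_mul_right_cancel c₁, hc1v.gcd_mul_left_cancel c₂]
    have hWmul : W c (a * b) = W c a * W c b := (W_isMult c).map_mul_of_coprime hab
    have hWa : W c a = W c₁ a := by
      rw [W_apply, W_apply]
      refine Finset.sum_congr rfl fun k hk => ?_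
      rw [Fint_congr (c' := c₁) (by
        rw [← hc12]
        exact Nat.Coprime.gcd_mul_right_cancel_right c₁
          ((hab.symm.coprime_dvd_left h2b).coprime_dvd_right (Nat.dvd_of_mem_divisors hk)))]
    have hWb : W c b = W c₂ b := by
      rw [W_apply, W_apply]
      refine Finset.sum_congr rfl fun k hk => ?_
      rw [Fint_congr (c' := c₂) (by
        rw [← hc12]
        exact Nat.Coprime.gcd_mul_left_cancel_right c₂
          ((hab.coprime_dvd_left h1a).coprime_dvd_right (Nat.dvd_of_mem_divisors hk)))]
    have hμc : (moebius c : ℤ) = (moebius c₁ : ℤ) * (moebius c₂ : ℤ) := by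
      rw [← hc12, isMultiplicative_moebius.map_mul_of_coprime hc1c2]
    have hgg : Nat.Coprime (Nat.gcd c₁ (a / c₁)) (Nat.gcd c₂ (b / c₂)) :=
      (hab.coprime_dvd_left (dvd_trans (Nat.gcd_dvd_left _ _) h1a)).coprime_dvd_right
        (dvd_trans (Nat.gcd_dvd_left _ _) h2b)
    have hμg : (moebius (Nat.gcd c₁ (a / c₁) * Nat.gcd c₂ (b / c₂)) : ℤ)
        = (moebius (Nat.gcd c₁ (a / c₁)) : ℤ) * (moebius (Nat.gcd c₂ (b / c₂)) : ℤ) := by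
      rw [isMultiplicative_moebius.map_mul_of_coprime hgg]
    have Ia := iha ha0 c₁ h1a
    have Ib := ihb hb0 c₂ h2b
    have hmul := congrArg₂ (· * ·) Ia Ib
    rw [hgcd, hquot, hWmul, hWa, hWb, hμc, hμg]
    push_cast
    push_cast at hmul
    linear_combination hmul

lemma summand_eq (c k : ℕ) (hk : 0 < k) :
    (Nat.gcd k c : ℚ) ^ 2 * sigmaZ ((k : ℚ) / (Nat.gcd k c : ℚ) ^ 2)
      = ((Fint c k : ℤ) : ℚ) := by
  set g := Nat.gcd k c with hg
  have hg0 : 0 < g := Nat.gcd_pos_of_pos_left c hk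
  have hgQ : ((g : ℚ) ^ 2) ≠ 0 := by positivity
  by_cases h : g ^ 2 ∣ k
  · have hx : (k : ℚ) / (g : ℚ) ^ 2 = ((k / g ^ 2 : ℕ) : ℚ) := by
      rw [div_eq_iff hgQ]
      exact_mod_cast (congrArg (Nat.cast (R := ℚ)) (Nat.div_mul_cancel h)).symm
    rw [hx, sigmaZ, Fint_apply, if_pos h]
    have hq0 : 0 < k / g ^ 2 := Nat.div_pos (Nat.le_of_dvd hk h) (by positivity)
    rw [if_pos ⟨Rat.den_natCast _, by rw [Rat.num_natCast]; exact_mod_cast hq0⟩]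
    simp only [Rat.num_natCast, Int.toNat_natCast]
    rw [sigma_one_apply]
    push_cast
    ring
  · rw [Fint_apply, if_neg h, sigmaZ]
    rw [if_neg, mul_zero, Int.cast_zero]
    rintro ⟨h1, h2⟩
    set x := (k : ℚ) / (g : ℚ) ^ 2 with hxdef
    have hxeq : (x.num : ℚ) = x := by
      conv_rhs => rw [← Rat.num_div_den x, h1]
      simp
    obtain ⟨m, hm⟩ : ∃ m : ℕ, x.num = (m : ℤ) := ⟨x.num.toNat, (Int.toNat_of_nonneg h2.le).symm⟩
    have hxk : (k : ℚ) = (x.num : ℚ) * (g : ℚ) ^ 2 := by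
      rw [hxeq, hxdef, div_mul_cancel₀ _ hgQ]
    rw [hm] at hxk
    have hN : k = m * g ^ 2 := by exact_mod_cast hxk
    exact h ⟨m, by rw [hN, mul_comm]⟩

/-- `Σ_{c | n} (μ(gcd(c,n/c))/gcd(c,n/c)) · Σ_{k | n} μ(n/k)·gcd(k,c)²·σ_ℤ(k/gcd(k,c)²) = φ(n)`. -/
theorem sum_mult_identity (n : ℕ) (hn : 0 < n) :
    (∑ c ∈ n.divisors,
        ((ArithmeticFunction.moebius (Nat.gcd c (n / c)) : ℚ) / (Nat.gcd c (n / c) : ℚ)) *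
          ∑ k ∈ n.divisors,
            (ArithmeticFunction.moebius (n / k) : ℚ) * (Nat.gcd k c : ℚ) ^ 2 *
              sigmaZ ((k : ℚ) / (Nat.gcd k c : ℚ) ^ 2)) = (Nat.totient n : ℚ) := by
  have hstep : ∀ c ∈ n.divisors,
      ((moebius (Nat.gcd c (n / c)) : ℚ) / (Nat.gcd c (n / c) : ℚ)) *
          ∑ k ∈ n.divisors,
            (moebius (n / k) : ℚ) * (Nat.gcd k c : ℚ) ^ 2 *
              sigmaZ ((k : ℚ) / (Nat.gcd k c : ℚ) ^ 2)
        = (moebius c : ℚ) * ((n / c : ℕ) : ℚ) := by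
    intro c hc
    have hcd : c ∣ n := Nat.dvd_of_mem_divisors hc
    have hinner : (∑ k ∈ n.divisors,
        (moebius (n / k) : ℚ) * (Nat.gcd k c : ℚ) ^ 2 *
          sigmaZ ((k : ℚ) / (Nat.gcd k c : ℚ) ^ 2)) = ((W c n : ℤ) : ℚ) := by
      rw [W_apply, Int.cast_sum]
      refine Finset.sum_congr rfl fun k hk => ?_
      rw [mul_assoc, summand_eq c k (Nat.pos_of_mem_divisors hk)]
      push_cast
      ring
    rw [hinner]
    have hg0 : 0 < Nat.gcd c (n / c) :=
      Nat.gcd_pos_of_pos_left _ (Nat.pos_of_mem_divisors hc)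
    have hkey := key_s15 n hn c hcd
    have h' := congrArg (fun z : ℤ => (z : ℚ)) hkey
    push_cast at h'
    have hgQ : ((Nat.gcd c (n / c) : ℕ) : ℚ) ≠ 0 := by positivity
    rw [div_mul_eq_mul_div, h', mul_div_assoc, div_self hgQ, mul_one,
      show ((n : ℤ) / (c : ℤ)) = ((n / c : ℕ) : ℤ) from (Int.natCast_div n c).symm,
      Int.cast_natCast]
  rw [Finset.sum_congr rfl hstep]
  have hinv := (ArithmeticFunction.sum_eq_iff_sum_mul_moebius_eq (R := ℚ)
      (f := fun d => (Nat.totient d : ℚ)) (g := fun d => (d : ℚ))).mp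
    (fun m hm => by exact_mod_cast congrArg (Nat.cast (R := ℚ)) (Nat.sum_totient m)) n hn
  rw [← Nat.sum_divisorsAntidiagonal (fun a b => (moebius a : ℚ) * (b : ℚ))]
  exact hinv
end
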